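/- arXiv:0806.2011 — 9 statements merged into one kernel-verified Lean document; each statement's English description precedes it below -/
import Mathlib

section
/- One has s_0 = s_1 = ⋯ = s_n = 0; if μ ≥ n+2 then s_{n+1} = μ / (max_{1≤i≤n} w_i); and s_k + s_{μ+n−k} = μ for every k with n+1 ≤ k ≤ μ−1. -/
open Finset

lemma refl_Ico (k : ℕ) : (Multiset.Ico 1 k).map (fun ℓ => k - ℓ) = Multiset.Ico 1 k := by
  rw [Multiset.Nodup.ext (Multiset.Nodup.map_on ?_ Multiset.nodup_Ico) Multiset.nodup_Ico]
  · intro x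
    simp only [Multiset.mem_map, Multiset.mem_Ico]
    constructor
    · rintro ⟨ℓ, hℓ, rfl⟩; omega
    · rintro hx; exact ⟨k - x, by omega, by omega⟩
  · intro x hx y hy h
    simp only [Multiset.mem_Ico] at hx hy
    omega

lemma refl_range (m : ℕ) :
    (Multiset.range m).map (fun j => m - 1 - j) = Multiset.range m := by
  rw [Multiset.Nodup.ext (Multiset.Nodup.map_on ?_ (Multiset.nodup_range m))
    (Multiset.nodup_range m)]
  · intro x
    simp only [Multiset.mem_map, Multiset.mem_range]
    constructor
    · rintro ⟨ℓ, hℓ, rfl⟩; omega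
    · rintro hx; exact ⟨m - 1 - x, by omega, by omega⟩
  · intro x hx y hy h
    simp only [Multiset.mem_range] at hx hy
    omega

lemma range_split (k : ℕ) (hk : 1 ≤ k) :
    Multiset.range k = 0 ::ₘ Multiset.Ico 1 k := by
  have h0 : (0:ℕ) ∉ Multiset.Ico 1 k := by simp
  rw [Multiset.Nodup.ext (Multiset.nodup_range k)
    (Multiset.nodup_cons.mpr ⟨h0, Multiset.nodup_Ico⟩)]
  intro x
  simp only [Multiset.mem_range, Multiset.mem_cons, Multiset.mem_Ico]
  omega

/-- `s₀ = ⋯ = sₙ = 0`; if `μ ≥ n+2` then `s_{n+1} = μ / max_{1≤i≤n} w_i`;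
and `s_k + s_{μ+n−k} = μ` for `n+1 ≤ k ≤ μ−1`. -/
theorem stmt_0 (n : ℕ) (hn : 1 ≤ n) (w : ℕ → ℕ) (hw0 : w 0 = 1)
    (hwpos : ∀ i ∈ Finset.Icc 1 n, 1 ≤ w i)
    (μ : ℕ) (hμ : μ = 1 + ∑ i ∈ Finset.Icc 1 n, w i)
    (s : ℕ → ℚ) (hmono : ∀ k, k + 1 < μ → s k ≤ s (k + 1))
    (hmult : (Multiset.range μ).map s =
      (Finset.range (n + 1)).val.bind fun i =>
        (Multiset.range (w i)).map fun ℓ => (ℓ : ℚ) * μ / (w i)) :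
    (∀ k ≤ n, s k = 0) ∧
    (n + 2 ≤ μ → s (n + 1) = (μ : ℚ) / (((Finset.Icc 1 n).sup w : ℕ) : ℚ)) ∧
    (∀ k, n + 1 ≤ k → k ≤ μ - 1 → s k + s (μ + n - k) = μ) := by
  classical
  have hwall : ∀ i ≤ n, 1 ≤ w i := by
    intro i hi
    rcases Nat.eq_zero_or_pos i with h | h
    · simp [h, hw0]
    · exact hwpos i (Finset.mem_Icc.mpr ⟨h, hi⟩)
  have hμn : n + 1 ≤ μ := by
    have hsum : n ≤ ∑ i ∈ Finset.Icc 1 n, w i := by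
      calc n = ∑ _i ∈ Finset.Icc 1 n, 1 := by simp
        _ ≤ _ := Finset.sum_le_sum hwpos
    omega
  have hμpos : (0:ℚ) < (μ:ℚ) := by
    exact_mod_cast (show 0 < μ by omega)
  set f : ℕ → ℕ → ℚ := fun i ℓ => (ℓ : ℚ) * μ / (w i) with hf
  set Tp : Multiset ℚ :=
    (Finset.range (n+1)).val.bind (fun i => (Multiset.Ico 1 (w i)).map (f i)) with hTp
  have hmultN : (Multiset.range μ).map s =
      (Finset.range (n+1)).val.bind (fun i => (Multiset.range (w i)).map (f i)) := by
    rw [hmult]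
    apply Multiset.bind_congr
    intro i _
    rw [hf]
    show Multiset.map _ (Multiset.bind _ (fun a => {((a:ℕ) : ℚ)})) = _
    rw [Multiset.bind_singleton, Multiset.map_map]
    rfl
  -- decompose the right-hand side
  have hmult' : (Multiset.range μ).map s = Multiset.replicate (n+1) (0:ℚ) + Tp := by
    rw [hmultN]
    have h1 : ∀ i ∈ (Finset.range (n+1)).val,
        (Multiset.range (w i)).map (f i) = {(0:ℚ)} + (Multiset.Ico 1 (w i)).map (f i) := by
      intro i hi
      rw [Finset.range_val, Multiset.mem_range] at hi
      rw [range_split (w i) (hwall i (by omega)), Multiset.map_cons]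
      have h0 : f i 0 = 0 := by simp [hf]
      rw [h0, ← Multiset.singleton_add]
    rw [Multiset.bind_congr h1, Multiset.bind_add, Multiset.bind_singleton]
    congr 1
    rw [show (fun _ : ℕ => (0:ℚ)) = Function.const ℕ (0:ℚ) from rfl, Multiset.map_const]
    congr 1
    simp
  have hTppos : ∀ x ∈ Tp, 0 < x := by
    intro x hx
    rw [hTp, Multiset.mem_bind] at hx
    obtain ⟨i, hi, hx⟩ := hx
    rw [Finset.range_val, Multiset.mem_range] at hi
    rw [Multiset.mem_map] at hx
    obtain ⟨ℓ, hℓ, rfl⟩ := hx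
    rw [Multiset.mem_Ico] at hℓ
    have hℓ1 : (0:ℚ) < (ℓ:ℚ) := by exact_mod_cast hℓ.1
    have hwi : (0:ℚ) < (w i : ℚ) := by exact_mod_cast hwall i (by omega)
    exact div_pos (mul_pos hℓ1 hμpos) hwi
  have hmono' : ∀ j k, j ≤ k → k < μ → s j ≤ s k := by
    intro j k hjk hk
    induction k with
    | zero =>
      have hj0 : j = 0 := by omega
      rw [hj0]
    | succ k ih =>
      by_cases h : j = k + 1
      · simp [h]
      · exact le_trans (ih (by omega) (by omega)) (hmono k hk)
  have hmemM : ∀ k, k < μ → s k ∈ Multiset.replicate (n+1) (0:ℚ) + Tp := by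
    intro k hk
    rw [← hmult']
    exact Multiset.mem_map.mpr ⟨k, Multiset.mem_range.mpr hk, rfl⟩
  have hnn : ∀ k, k < μ → 0 ≤ s k := by
    intro k hk
    rcases Multiset.mem_add.mp (hmemM k hk) with h | h
    · rw [Multiset.eq_of_mem_replicate h]
    · exact le_of_lt (hTppos _ h)
  -- count zeros
  have hc : ((Multiset.range μ).map s).count 0 = n + 1 := by
    rw [hmult', Multiset.count_add, Multiset.count_replicate]
    have h0 : Tp.count 0 = 0 := Multiset.count_eq_zero.mpr
      (fun h => lt_irrefl 0 (hTppos 0 h))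
    simp [h0]
  set F : Finset ℕ := (Finset.range μ).filter (fun k => (0:ℚ) = s k) with hF
  have hFcard : F.card = n + 1 := by
    rw [← hc, Multiset.count_map, hF, Finset.card_def, Finset.filter_val,
      Finset.range_val]
  have hFdc : ∀ k ∈ F, ∀ j, j ≤ k → j ∈ F := by
    intro k hk j hj
    rw [hF, Finset.mem_filter, Finset.mem_range] at hk ⊢
    refine ⟨by omega, ?_⟩
    have h1 : s j ≤ s k := hmono' j k hj hk.1
    have h2 : 0 ≤ s j := hnn j (by omega)
    rw [← hk.2] at h1
    linarith
  have hFne : F.Nonempty := Finset.card_pos.mp (by omega)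
  have hFIic : F = Finset.Iic (F.max' hFne) := by
    ext j
    constructor
    · intro hj; exact Finset.mem_Iic.mpr (Finset.le_max' F j hj)
    · intro hj
      exact hFdc _ (F.max'_mem hFne) j (Finset.mem_Iic.mp hj)
  have hmax : F.max' hFne = n := by
    have := hFcard
    rw [hFIic, Nat.card_Iic] at this
    omega
  have hzero : ∀ k ≤ n, s k = 0 := by
    intro k hk
    have : k ∈ F := by rw [hFIic, hmax]; exact Finset.mem_Iic.mpr hk
    rw [hF, Finset.mem_filter] at this
    exact this.2.symm
  have hposk : ∀ k, n + 1 ≤ k → k < μ → 0 < s k := by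
    intro k hk1 hk2
    rcases lt_or_eq_of_le (hnn k hk2) with h | h
    · exact h
    · exfalso
      have : k ∈ F := by
        rw [hF, Finset.mem_filter, Finset.mem_range]; exact ⟨hk2, h⟩
      rw [hFIic, hmax, Finset.mem_Iic] at this
      omega
  have hels : ∀ x ∈ Tp, ∃ k, n + 1 ≤ k ∧ k < μ ∧ s k = x := by
    intro x hx
    have hx0 : 0 < x := hTppos x hx
    have : x ∈ (Multiset.range μ).map s := by
      rw [hmult']; exact Multiset.mem_add.mpr (Or.inr hx)
    obtain ⟨k, hk, rfl⟩ := Multiset.mem_map.mp this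
    rw [Multiset.mem_range] at hk
    refine ⟨k, ?_, hk, rfl⟩
    by_contra h
    rw [hzero k (by omega)] at hx0
    exact lt_irrefl 0 hx0
  refine ⟨fun k hk => hzero k hk, ?_, ?_⟩
  · -- part 2
    intro h2
    set W := (Finset.Icc 1 n).sup w with hW
    have hne : (Finset.Icc 1 n).Nonempty := ⟨1, Finset.mem_Icc.mpr ⟨le_refl 1, hn⟩⟩
    obtain ⟨i₀, hi₀mem, hi₀⟩ := Finset.exists_mem_eq_sup _ hne w
    have hW2 : 2 ≤ W := by
      by_contra h
      push_neg at h
      have hsum : ∑ i ∈ Finset.Icc 1 n, w i ≤ ∑ _i ∈ Finset.Icc 1 n, 1 :=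
        Finset.sum_le_sum (fun i hi => by
          have := Finset.le_sup (f := w) hi
          omega)
      simp at hsum
      omega
    have hWposQ : (0:ℚ) < (W:ℚ) := by exact_mod_cast (by omega : 0 < W)
    have hn1μ : n + 1 < μ := by omega
    -- s (n+1) ∈ Tp
    have hmem : s (n+1) ∈ Tp := by
      rcases Multiset.mem_add.mp (hmemM (n+1) hn1μ) with h | h
      · exfalso
        have := hposk (n+1) (le_refl _) hn1μ
        rw [Multiset.eq_of_mem_replicate h] at this
        exact lt_irrefl 0 this
      · exact h
    have hge : (μ:ℚ) / W ≤ s (n+1) := by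
      rw [hTp, Multiset.mem_bind] at hmem
      obtain ⟨i, hi, hx⟩ := hmem
      rw [Finset.range_val, Multiset.mem_range] at hi
      obtain ⟨ℓ, hℓ, hval⟩ := Multiset.mem_map.mp hx
      rw [Multiset.mem_Ico] at hℓ
      have hi1 : 1 ≤ i := by
        by_contra h
        have : i = 0 := by omega
        rw [this, hw0] at hℓ
        omega
      have hwiW : w i ≤ W := Finset.le_sup (f := w) (Finset.mem_Icc.mpr ⟨hi1, by omega⟩)
      have hwiQ : (0:ℚ) < (w i : ℚ) := by exact_mod_cast hwall i (by omega)
      have hℓQ : (1:ℚ) ≤ (ℓ:ℚ) := by exact_mod_cast hℓ.1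
      have hwiWQ : (w i : ℚ) ≤ (W:ℚ) := by exact_mod_cast hwiW
      calc (μ:ℚ) / W = 1 * μ / W := by ring
        _ ≤ (ℓ:ℚ) * μ / (w i) := by gcongr
        _ = s (n+1) := hval
    have hle : s (n+1) ≤ (μ:ℚ) / W := by
      have hmemW : (μ:ℚ) / W ∈ Tp := by
        rw [hTp, Multiset.mem_bind]
        refine ⟨i₀, ?_, ?_⟩
        · rw [Finset.range_val, Multiset.mem_range]
          have := (Finset.mem_Icc.mp hi₀mem).2
          omega
        · rw [Multiset.mem_map]
          refine ⟨1, Multiset.mem_Ico.mpr ⟨le_refl 1, by omega⟩, ?_⟩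
          rw [hf]
          simp [← hi₀, hW]
      obtain ⟨k, hk1, hk2, hk3⟩ := hels _ hmemW
      rw [← hk3]
      exact hmono' (n+1) k hk1 hk2
    exact le_antisymm hle hge
  · -- part 3
    set m := μ - (n+1) with hm
    have hμm : μ = (n+1) + m := by omega
    set A : List ℚ := (List.range m).map (fun j => s (n+1+j)) with hA
    set B : List ℚ := (List.range m).map (fun j => (μ:ℚ) - s (μ-1-j)) with hB
    have hAms : (↑A : Multiset ℚ) = (Multiset.range m).map (fun j => s (n+1+j)) := rfl
    have hBms : (↑B : Multiset ℚ) = (Multiset.range m).map (fun j => (μ:ℚ) - s (μ-1-j)) := rfl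
    -- A as multiset equals Tp
    have hATp : (Multiset.range m).map (fun j => s (n+1+j)) = Tp := by
      have key : Multiset.replicate (n+1) (0:ℚ) + (Multiset.range m).map (fun j => s (n+1+j))
          = Multiset.replicate (n+1) (0:ℚ) + Tp := by
        rw [← hmult']
        conv_rhs => rw [hμm]
        rw [Multiset.range_add, Multiset.map_add, Multiset.map_map]
        congr 1
        · rw [eq_comm, Multiset.eq_replicate]
          constructor
          · simp
          · intro b hb
            obtain ⟨k, hk, rfl⟩ := Multiset.mem_map.mp hb
            rw [Multiset.mem_range] at hk
            exact hzero k (by omega)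
      exact add_left_cancel key
    -- Tp is symmetric about μ/2
    have hsym : Tp.map (fun x => (μ:ℚ) - x) = Tp := by
      rw [hTp, Multiset.map_bind]
      apply Multiset.bind_congr
      intro i hi
      rw [Finset.range_val, Multiset.mem_range] at hi
      have hwiQ : (0:ℚ) < (w i : ℚ) := by exact_mod_cast hwall i (by omega)
      rw [Multiset.map_map]
      have step : Multiset.map ((fun x => (μ:ℚ) - x) ∘ f i) (Multiset.Ico 1 (w i))
          = Multiset.map (f i ∘ (fun ℓ => w i - ℓ)) (Multiset.Ico 1 (w i)) := by
        apply Multiset.map_congr rfl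
        intro ℓ hℓ
        rw [Multiset.mem_Ico] at hℓ
        simp only [Function.comp_apply, hf]
        have hcast : ((w i - ℓ : ℕ) : ℚ) = (w i : ℚ) - (ℓ : ℚ) := by
          push_cast [Nat.cast_sub (le_of_lt hℓ.2)]; ring
        rw [hcast]
        field_simp
      rw [step, ← Multiset.map_map, refl_Ico]
    -- B as multiset equals A as multiset
    have hABms : (↑A : Multiset ℚ) = (↑B : Multiset ℚ) := by
      rw [hAms, hBms, hATp, ← hsym, ← hATp, Multiset.map_map]
      conv_lhs => rw [← refl_range m, Multiset.map_map]
      apply Multiset.map_congr rfl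
      intro j hj
      rw [Multiset.mem_range] at hj
      simp only [Function.comp_apply]
      congr 1
      congr 1
      omega
    -- sortedness
    have hAsorted : A.Pairwise (· ≤ ·) := by
      rw [hA, List.pairwise_map]
      refine List.Pairwise.imp_of_mem ?_ (List.pairwise_lt_range (n := m))
      intro a b ha hb hab
      rw [List.mem_range] at ha hb
      exact hmono' (n+1+a) (n+1+b) (by omega) (by omega)
    have hBsorted : B.Pairwise (· ≤ ·) := by
      rw [hB, List.pairwise_map]
      refine List.Pairwise.imp_of_mem ?_ (List.pairwise_lt_range (n := m))
      intro a b ha hb hab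
      rw [List.mem_range] at ha hb
      have : s (μ-1-b) ≤ s (μ-1-a) := hmono' (μ-1-b) (μ-1-a) (by omega) (by omega)
      linarith
    have hAB : A = B :=
      List.Perm.eq_of_pairwise' hAsorted hBsorted (Multiset.coe_eq_coe.mp hABms)
    intro k hk1 hk2
    have hkμ : k < μ := by omega
    set j := k - (n+1) with hj
    have hjm : j < m := by omega
    have hval : s (n+1+j) = (μ:ℚ) - s (μ-1-j) := by
      have h := congrArg (fun l : List ℚ => l[j]?) hAB
      simp only [hA, hB, List.getElem?_map, List.getElem?_range, hjm, if_pos,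
        Option.map_some] at h
      exact Option.some_injective _ h
    have h1 : n + 1 + j = k := by omega
    have h2 : μ - 1 - j = μ + n - k := by omega
    rw [h1, h2] at hval
    linarith
end

section
/- One has α_k = k for 0 ≤ k ≤ n; α_{k+1} ≤ α_k + 1 for all 0 ≤ k ≤ μ−2; α_k + α_{μ+n−k} = n for every k with n+1 ≤ k ≤ μ−1; and α_k + α_{n−k} = n for every k with 0 ≤ k ≤ n. -/
open Finset

lemma rev_range (m : ℕ) : (Multiset.range m).map (fun ℓ => m - 1 - ℓ) = Multiset.range m := by
  apply Multiset.eq_of_le_of_card_le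
  · rw [Multiset.le_iff_subset]
    · intro x hx
      rw [Multiset.mem_map] at hx
      obtain ⟨ℓ, hℓ, rfl⟩ := hx
      rw [Multiset.mem_range] at hℓ ⊢
      omega
    · apply Multiset.Nodup.map_on _ (Multiset.nodup_range m)
      intro x hx y hy h
      rw [Multiset.mem_range] at hx hy
      omega
  · simp

lemma sorted_unique (m : ℕ) (a b : ℕ → ℚ)
    (ha : ∀ j k, j ≤ k → k < m → a j ≤ a k)
    (hb : ∀ j k, j ≤ k → k < m → b j ≤ b k)
    (h : (Multiset.range m).map a = (Multiset.range m).map b) :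
    ∀ k, k < m → a k = b k := by
  have key : (List.range m).map a = (List.range m).map b := by
    have hsort : ∀ {l₁ l₂ : List ℚ}, l₁.Perm l₂ → l₁.Pairwise (· ≤ ·) → l₂.Pairwise (· ≤ ·) →
        l₁ = l₂ := fun hp h1 h2 => List.Perm.eq_of_pairwise' h1 h2 hp
    apply hsort
    · rw [← Multiset.coe_eq_coe, ← Multiset.map_coe, ← Multiset.map_coe, Multiset.coe_range]
      exact h
    · rw [List.pairwise_map]
      refine (List.pairwise_lt_range (n := m)).imp_of_mem ?_
      intro i j hi hj hij
      exact ha i j hij.le (List.mem_range.mp hj)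
    · rw [List.pairwise_map]
      refine (List.pairwise_lt_range (n := m)).imp_of_mem ?_
      intro i j hi hj hij
      exact hb i j hij.le (List.mem_range.mp hj)
  intro k hk
  have hk' : k < ((List.range m).map a).length := by simpa using hk
  have := List.getElem_of_eq key hk'
  simpa using this

lemma range_split_s1 (a b : ℕ) :
    Multiset.range (a + b) = Multiset.range a + (Multiset.range b).map (fun j => a + j) := by
  rw [← Multiset.coe_range, List.range_add, ← Multiset.coe_add, ← Multiset.coe_range a,
    ← Multiset.coe_range b, ← Multiset.map_coe]

/-- with `α_k = k − s_k`: `α_k = k` for `0 ≤ k ≤ n`; `α_{k+1} ≤ α_k + 1`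
for `0 ≤ k ≤ μ−2`; `α_k + α_{μ+n−k} = n` for `n+1 ≤ k ≤ μ−1`; and `α_k + α_{n−k} = n`
for `0 ≤ k ≤ n`. -/
theorem stmt_1 (n : ℕ) (hn : 1 ≤ n) (w : ℕ → ℕ) (hw0 : w 0 = 1)
    (hwpos : ∀ i ∈ Finset.Icc 1 n, 1 ≤ w i)
    (μ : ℕ) (hμ : μ = 1 + ∑ i ∈ Finset.Icc 1 n, w i)
    (s : ℕ → ℚ) (hmono : ∀ k, k + 1 < μ → s k ≤ s (k + 1))
    (hmult : (Multiset.range μ).map s =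
      (Finset.range (n + 1)).val.bind fun i =>
        (Multiset.range (w i)).map fun ℓ => (ℓ : ℚ) * μ / (w i))
    (α : ℕ → ℚ) (hα : ∀ k, α k = (k : ℚ) - s k) :
    (∀ k ≤ n, α k = k) ∧
    (∀ k, k ≤ μ - 2 → α (k + 1) ≤ α k + 1) ∧
    (∀ k, n + 1 ≤ k → k ≤ μ - 1 → α k + α (μ + n - k) = n) ∧
    (∀ k ≤ n, α k + α (n - k) = n) := by
  -- basic inequalities
  have hw : ∀ i < n + 1, 1 ≤ w i := by
    intro i hi
    rcases Nat.eq_zero_or_pos i with h0 | h1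
    · subst h0; omega
    · exact hwpos i (Finset.mem_Icc.mpr ⟨h1, by omega⟩)
  have hmem_lt : ∀ i, i ∈ (Finset.range (n+1)).val → i < n + 1 := by
    intro i hi
    rwa [Finset.range_val, Multiset.mem_range] at hi
  have hμn : n + 1 ≤ μ := by
    have h1 : n ≤ ∑ i ∈ Finset.Icc 1 n, w i := by
      calc n = ∑ _i ∈ Finset.Icc 1 n, 1 := by
              rw [Finset.sum_const, Nat.card_Icc, smul_eq_mul]; omega
        _ ≤ _ := Finset.sum_le_sum fun i hi => hwpos i hi
    omega
  have hμQ : (0:ℚ) < μ := by exact_mod_cast (by omega : 0 < μ)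
  -- monotonicity in general form
  have smono : ∀ j k, j ≤ k → k < μ → s j ≤ s k := by
    have key : ∀ d j, j + d < μ → s j ≤ s (j + d) := by
      intro d
      induction d with
      | zero => intro j _; simp
      | succ d ih =>
        intro j h
        have h1 := ih j (by omega)
        have h2 := hmono (j + d) (by omega)
        calc s j ≤ s (j + d) := h1
          _ ≤ s (j + d + 1) := h2
          _ = s (j + (d + 1)) := by ring_nf
    intro j k hjk hk
    have := key (k - j) j (by omega)
    rwa [show j + (k - j) = k by omega] at this
  -- clean form of the multiset hypothesis
  have hmult2 : (Multiset.range μ).map s =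
      (Finset.range (n + 1)).val.bind (fun i =>
        (Multiset.range (w i)).map (fun ℓ : ℕ => (ℓ : ℚ) * μ / (w i))) := by
    rw [hmult]
    apply Multiset.bind_congr
    intro i _
    have h1 : (do let a ← Multiset.range (w i); pure ((a:ℕ):ℚ))
        = (Multiset.range (w i)).map (fun a : ℕ => (a:ℚ)) := by
      simp [Multiset.pure_def, Multiset.bind_def, Multiset.bind_singleton]
    rw [h1, Multiset.map_map]
    rfl
  clear hmult
  -- the positive part of the multiset
  set g : ℕ → Multiset ℚ :=
    fun i => (Multiset.range (w i - 1)).map (fun ℓ : ℕ => ((ℓ:ℚ) + 1) * μ / (w i)) with hg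
  set T : Multiset ℚ := (Finset.range (n + 1)).val.bind g with hT
  have hS : (Multiset.range μ).map s = Multiset.replicate (n + 1) (0:ℚ) + T := by
    rw [hmult2]
    have step : ∀ i ∈ (Finset.range (n+1)).val,
        ((Multiset.range (w i)).map (fun ℓ : ℕ => (ℓ : ℚ) * μ / (w i)))
        = (fun i => ({(0:ℚ)} : Multiset ℚ) + g i) i := by
      intro i hi
      have hwi : 1 ≤ w i := hw i (hmem_lt i hi)
      obtain ⟨c, hc⟩ : ∃ c, w i = c + 1 := ⟨w i - 1, by omega⟩
      have hr : Multiset.range (w i) = 0 ::ₘ (Multiset.range (w i - 1)).map (· + 1) := by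
        rw [hc, show (c + 1 - 1) = c by omega, ← Multiset.coe_range (c+1),
          List.range_succ_eq_map]
        rfl
      rw [hr, Multiset.map_cons, Multiset.map_map]
      show _ = ({(0:ℚ)} : Multiset ℚ) + g i
      rw [Multiset.singleton_add]
      simp only [Nat.cast_zero, zero_mul, zero_div]
      congr 1
      apply Multiset.map_congr rfl
      intro x _
      simp only [Function.comp]
      push_cast
      ring
    rw [Multiset.bind_congr step, Multiset.bind_add, Multiset.bind_singleton,
      Multiset.map_const', hT]
    congr 1
    rw [Finset.range_val, Multiset.card_range]
  -- symmetry of T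
  have hTsym : T.map (fun x => (μ:ℚ) - x) = T := by
    rw [hT, Multiset.map_bind]
    apply Multiset.bind_congr
    intro i hi
    have hwi : 1 ≤ w i := hw i (hmem_lt i hi)
    have hwQ : (0:ℚ) < w i := by exact_mod_cast hwi
    rw [hg]
    simp only
    rw [Multiset.map_map]
    have key : ∀ ℓ ∈ Multiset.range (w i - 1),
        ((fun x => (μ:ℚ) - x) ∘ fun ℓ : ℕ => ((ℓ:ℚ) + 1) * μ / (w i)) ℓ
        = ((fun ℓ : ℕ => ((ℓ:ℚ) + 1) * μ / (w i)) ∘ (fun ℓ => (w i - 1) - 1 - ℓ)) ℓ := by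
      intro ℓ hℓ
      rw [Multiset.mem_range] at hℓ
      simp only [Function.comp]
      have hc : ((w i - 1 - 1 - ℓ : ℕ) : ℚ) + (ℓ:ℚ) + 2 = (w i : ℚ) := by
        have h9 : (w i - 1 - 1 - ℓ) + ℓ + 2 = w i := by omega
        exact_mod_cast congrArg (Nat.cast : ℕ → ℚ) h9
      field_simp
      nlinarith [hc]
    rw [Multiset.map_congr rfl key, ← Multiset.map_map, rev_range]
  -- bounds on elements of T
  have hTpos : ∀ x ∈ T, 0 < x := by
    intro x hx
    rw [hT, Multiset.mem_bind] at hx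
    obtain ⟨i, hi, hx⟩ := hx
    rw [hg] at hx
    simp only [Multiset.mem_map] at hx
    obtain ⟨ℓ, hℓ, rfl⟩ := hx
    have hwi : 1 ≤ w i := hw i (hmem_lt i hi)
    have hwQ : (0:ℚ) < w i := by exact_mod_cast hwi
    apply div_pos (mul_pos (by positivity) hμQ) hwQ
  have hTub : ∀ x ∈ T, x ≤ μ := by
    intro x hx
    rw [hT, Multiset.mem_bind] at hx
    obtain ⟨i, hi, hx⟩ := hx
    rw [hg] at hx
    simp only [Multiset.mem_map] at hx
    obtain ⟨ℓ, hℓ, rfl⟩ := hx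
    rw [Multiset.mem_range] at hℓ
    have hwi : 1 ≤ w i := hw i (hmem_lt i hi)
    have hwQ : (0:ℚ) < w i := by exact_mod_cast hwi
    have hℓQ : (ℓ:ℚ) + 1 ≤ (w i : ℚ) := by exact_mod_cast (by omega : ℓ + 1 ≤ w i)
    rw [div_le_iff₀ hwQ]
    nlinarith [hμQ.le]
  -- bounds on s
  have hsmem : ∀ k, k < μ → 0 ≤ s k ∧ s k ≤ μ := by
    intro k hk
    have hmem : s k ∈ Multiset.replicate (n+1) (0:ℚ) + T := by
      rw [← hS]
      exact Multiset.mem_map_of_mem s (Multiset.mem_range.mpr hk)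
    rw [Multiset.mem_add] at hmem
    rcases hmem with h | h
    · rw [Multiset.eq_of_mem_replicate h]
      exact ⟨le_refl 0, hμQ.le⟩
    · exact ⟨(hTpos _ h).le, hTub _ h⟩
  -- s vanishes on the first n+1 indices
  have hsn : s n = 0 := by
    by_contra hne
    have hpos : 0 < s n := lt_of_le_of_ne (hsmem n (by omega)).1 (Ne.symm hne)
    have hcount : Multiset.count (0:ℚ) ((Multiset.range μ).map s) = n + 1 := by
      rw [hS, Multiset.count_add, Multiset.count_replicate, if_pos rfl,
        Multiset.count_eq_zero.mpr, add_zero]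
      intro h0
      exact absurd (hTpos 0 h0) (lt_irrefl 0)
    rw [show μ = (n+1) + (μ - (n+1)) by omega, range_split_s1, Multiset.map_add,
      Multiset.count_add] at hcount
    have h2 : Multiset.count (0:ℚ) ((((Multiset.range (μ - (n+1))).map
        (fun j => (n+1) + j))).map s) = 0 := by
      rw [Multiset.count_eq_zero]
      intro hmem
      rw [Multiset.map_map, Multiset.mem_map] at hmem
      obtain ⟨j, hj, hj0⟩ := hmem
      rw [Multiset.mem_range] at hj
      have hle : s n ≤ s ((n+1) + j) := smono n ((n+1)+j) (by omega) (by omega)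
      simp only [Function.comp] at hj0
      rw [hj0] at hle
      linarith
    have h1 : Multiset.count (0:ℚ) ((Multiset.range (n+1)).map s) ≤ n := by
      rw [Multiset.range_succ, Multiset.map_cons, Multiset.count_cons,
        if_neg (fun h => hne h.symm), add_zero]
      calc Multiset.count (0:ℚ) ((Multiset.range n).map s)
          ≤ Multiset.card ((Multiset.range n).map s) := Multiset.count_le_card _ _
        _ = n := by simp
    omega
  have hszero : ∀ k ≤ n, s k = 0 := by
    intro k hk
    have h1 : s k ≤ s n := smono k n hk (by omega)
    have h2 := (hsmem k (by omega)).1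
    rw [hsn] at h1
    linarith
  -- decomposition of the sorted sequence
  set m : ℕ := μ - (n + 1) with hm
  set U : Multiset ℚ := (Multiset.range m).map (fun j => s ((n+1) + j)) with hU
  have hmapsS : (Multiset.range μ).map s = Multiset.replicate (n+1) (0:ℚ) + U := by
    rw [show μ = (n+1) + m by omega, range_split_s1, Multiset.map_add, Multiset.map_map]
    congr 1
    rw [show ((Multiset.range (n+1)).map s)
        = (Multiset.range (n+1)).map (fun _ => (0:ℚ)) from
      Multiset.map_congr rfl (fun x hx => hszero x (by
        rw [Multiset.mem_range] at hx; omega)), Multiset.map_const']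
    simp
  have hUT : U = T := by
    have h3 := hS
    rw [hmapsS] at h3
    exact add_left_cancel h3
  have hUsym : U.map (fun x => (μ:ℚ) - x) = U := by rw [hUT]; exact hTsym
  -- the reflected sequence
  set t : ℕ → ℚ := fun k => if k ≤ n then 0 else (μ:ℚ) - s (μ + n - k) with ht
  have tmono : ∀ j k, j ≤ k → k < μ → t j ≤ t k := by
    intro j k hjk hk
    rw [ht]
    simp only
    by_cases hj : j ≤ n
    · rw [if_pos hj]
      by_cases hk2 : k ≤ n
      · rw [if_pos hk2]
      · rw [if_neg hk2]
        have := (hsmem (μ + n - k) (by omega)).2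
        linarith
    · rw [if_neg hj, if_neg (by omega : ¬ k ≤ n)]
      have := smono (μ + n - k) (μ + n - j) (by omega) (by omega)
      linarith
  have htS : (Multiset.range μ).map t = (Multiset.range μ).map s := by
    rw [hmapsS, show μ = (n+1) + m by omega, range_split_s1, Multiset.map_add, Multiset.map_map]
    congr 1
    · rw [show ((Multiset.range (n+1)).map t)
          = (Multiset.range (n+1)).map (fun _ => (0:ℚ)) from
        Multiset.map_congr rfl (fun x hx => by
          rw [Multiset.mem_range] at hx
          rw [ht]
          simp only
          rw [if_pos (by omega : x ≤ n)]), Multiset.map_const']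
      simp
    · have key : ∀ j ∈ Multiset.range m,
          (t ∘ fun j => (n+1) + j) j
          = ((fun x => (μ:ℚ) - x) ∘ ((fun j' => s ((n+1) + j')) ∘ (fun j => m - 1 - j))) j := by
        intro j hj
        rw [Multiset.mem_range] at hj
        simp only [Function.comp]
        rw [ht]
        simp only
        rw [if_neg (by omega : ¬ (n+1) + j ≤ n),
          show μ + n - ((n+1) + j) = (n+1) + (m - 1 - j) by omega]
      rw [Multiset.map_congr rfl key, ← Multiset.map_map, ← Multiset.map_map, rev_range]
      exact hUsym
  have hts : ∀ k, k < μ → t k = s k := sorted_unique μ t s tmono smono htS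
  -- now the four statements
  refine ⟨?_, ?_, ?_, ?_⟩
  · intro k hk
    rw [hα, hszero k hk]
    ring
  · intro k hk
    have h1 : k + 1 < μ := by omega
    have := hmono k h1
    rw [hα, hα]
    push_cast
    linarith
  · intro k hk1 hk2
    have hkμ : k < μ := by omega
    have hkey := (hts k hkμ).symm
    rw [ht] at hkey
    simp only at hkey
    rw [if_neg (by omega : ¬ k ≤ n)] at hkey
    rw [hα, hα]
    have hcast : ((μ + n - k : ℕ) : ℚ) = (μ:ℚ) + n - k := by
      have h9 : (μ + n - k : ℕ) + k = μ + n := by omega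
      have h10 := congrArg (Nat.cast : ℕ → ℚ) h9
      push_cast at h10
      linarith
    rw [hcast]
    linarith
  · intro k hk
    rw [hα, hα, hszero k hk, hszero (n - k) (by omega)]
    have hcast : ((n - k : ℕ) : ℚ) = (n:ℚ) - k := by
      have h9 : (n - k : ℕ) + k = n := by omega
      have h10 := congrArg (Nat.cast : ℕ → ℚ) h9
      push_cast at h10
      linarith
    rw [hcast]
    ring
end

section
/- For every complex number x one has the matrix identity x·(d/dx)A_0(x) = (1/μ)·A_0(x) + [A_0(x), R] + (1/μ)·[A_0(x), A_∞], where [·,·] denotes the commutator. (This identity expresses the compatibility relation ∇(R_0) + Φ = [Φ, R_∞] of the Frobenius type structure on ℂ*, equivalently the flatness of the connection whose matrix is (A_0(x)/θ + A_∞)dθ/θ + (R − A_0(x)/(μθ))dx/x.) -/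
open Finset Matrix

noncomputable section

/-- The matrix `A_0(x)`: `A_0(x)_{1,0} = μx`, `A_0(x)_{k+1,k} = μ` for `1 ≤ k ≤ μ−2`,
`A_0(x)_{0,μ−1} = μ`, all other entries `0`. -/
def A0 (μ : ℕ) (x : ℂ) : Matrix (Fin μ) (Fin μ) ℂ :=
  Matrix.of fun i j =>
    if (i : ℕ) = (j : ℕ) + 1 then (if (j : ℕ) = 0 then (μ : ℂ) * x else (μ : ℂ))
    else if (i : ℕ) = 0 ∧ (j : ℕ) = μ - 1 then (μ : ℂ) else 0

/-- The diagonal matrix `A_∞ = diag(α_0, …, α_{μ−1})` with `α_k = k − s_k`. -/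
def Ainf (μ : ℕ) (s : ℕ → ℚ) : Matrix (Fin μ) (Fin μ) ℂ :=
  Matrix.diagonal fun k : Fin μ => ((k : ℕ) : ℂ) - ((s (k : ℕ) : ℚ) : ℂ)

/-- The diagonal matrix `R`: `R_{0,0} = 0`, `R_{k,k} = −1` for `1 ≤ k ≤ n`, and
`R_{k,k} = −s_{μ+n−k}/μ` for `n+1 ≤ k ≤ μ−1`. -/
def Rmat (μ n : ℕ) (s : ℕ → ℚ) : Matrix (Fin μ) (Fin μ) ℂ :=
  Matrix.diagonal fun k : Fin μ =>
    if (k : ℕ) = 0 then 0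
    else if (k : ℕ) ≤ n then -1
    else -((s (μ + n - (k : ℕ)) : ℚ) : ℂ) / (μ : ℂ)


lemma filter_bind' {α β : Type} (m : Multiset β) (f : β → Multiset α)
    (p : α → Prop) [DecidablePred p] :
    (m.bind f).filter p = m.bind fun b => (f b).filter p := by
  induction m using Multiset.induction with
  | empty => simp
  | cons a m ih => simp [Multiset.cons_bind, Multiset.filter_add, ih]

lemma smono {μ : ℕ} {s : ℕ → ℚ} (hmono : ∀ k, k + 1 < μ → s k ≤ s (k + 1)) :
    ∀ j k, j ≤ k → k < μ → s j ≤ s k := by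
  intro j k hjk hk
  induction k with
  | zero => obtain rfl := Nat.le_zero.1 hjk; rfl
  | succ k ih =>
    rcases Nat.eq_or_lt_of_le hjk with h | h
    · subst h; rfl
    · exact le_trans (ih (by omega) (by omega)) (hmono k hk)


lemma ico_rev (a b c : ℕ) (h : a + b = c + 1) (ha : 0 < a) :
    (Finset.Ico a b).val.map (fun ℓ => c - ℓ) = (Finset.Ico a b).val := by
  by_cases hab : a < b
  · have himg : Finset.image (fun ℓ => c - ℓ) (Finset.Ico a b) = Finset.Ico a b := by
      ext k
      simp only [Finset.mem_image, Finset.mem_Ico]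
      constructor
      · rintro ⟨ℓ, ⟨h1, h2⟩, rfl⟩; omega
      · rintro ⟨h1, h2⟩; exact ⟨c - k, by omega, by omega⟩
    have hinj : Set.InjOn (fun ℓ => c - ℓ) (Finset.Ico a b) := by
      intro u hu v hv huv
      simp only [Finset.coe_Ico, Set.mem_Ico] at hu hv
      simp only at huv; omega
    rw [← Finset.image_val_of_injOn hinj, himg]
  · have : Finset.Ico a b = ∅ := Finset.Ico_eq_empty (by omega)
    simp [this]

theorem keyfacts (n : ℕ) (hn : 1 ≤ n) (w : ℕ → ℕ) (hw0 : w 0 = 1)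
    (hwpos : ∀ i ∈ Finset.Icc 1 n, 1 ≤ w i)
    (μ : ℕ) (hμ : μ = 1 + ∑ i ∈ Finset.Icc 1 n, w i)
    (s : ℕ → ℚ) (hmono : ∀ k, k + 1 < μ → s k ≤ s (k + 1))
    (hmult : (Multiset.range μ).map s =
      (Finset.range (n + 1)).val.bind fun i =>
        (Multiset.range (w i)).map fun ℓ => (ℓ : ℚ) * μ / (w i)) :
    (n + 1 ≤ μ) ∧ (∀ k, k < μ → k ≤ n → s k = 0) ∧
      (∀ k, n + 1 ≤ k → k < μ → s k + s (μ + n - k) = μ) := by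
  have hnμ : n + 1 ≤ μ := by
    have h1 : ∑ i ∈ Finset.Icc 1 n, 1 ≤ ∑ i ∈ Finset.Icc 1 n, w i :=
      Finset.sum_le_sum hwpos
    simp [Nat.card_Icc] at h1
    omega
  have hμ0 : 0 < μ := by omega
  have hw : ∀ i ∈ Finset.range (n + 1), 1 ≤ w i := by
    intro i hi
    rcases Nat.eq_zero_or_pos i with rfl | hi'
    · omega
    · exact hwpos i (Finset.mem_Icc.2 ⟨hi', by simpa using Nat.lt_succ_iff.mp (Finset.mem_range.1 hi)⟩)
  have hmult' : (Multiset.range μ).map s = (Finset.range (n + 1)).val.bind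
      (fun i => Multiset.map (fun ℓ : ℕ => (ℓ : ℚ) * μ / (w i)) (Multiset.range (w i))) := by
    rw [hmult]
    apply Multiset.bind_congr
    intro i _
    simp only [Multiset.pure_def, Multiset.bind_def, Multiset.bind_singleton,
      Multiset.map_map]
    rfl
  clear hmult
  have hnonneg : ∀ k, k < μ → 0 ≤ s k := by
    intro k hk
    have hmem : s k ∈ (Multiset.range μ).map s :=
      Multiset.mem_map_of_mem _ (Multiset.mem_range.2 hk)
    rw [hmult'] at hmem
    obtain ⟨i, _, hmem2⟩ := Multiset.mem_bind.1 hmem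
    obtain ⟨ℓ, _, hval⟩ := Multiset.mem_map.1 hmem2
    rw [← hval]
    show (0:ℚ) ≤ (ℓ:ℚ) * μ / (w i)
    positivity
  set F := (Finset.range μ).filter (fun k => ¬ s k = 0) with hFdef
  -- E1 : filtered multiset identity
  have E1 : F.val.map s = (Finset.range (n + 1)).val.bind fun i =>
      Multiset.map (fun ℓ : ℕ => (ℓ : ℚ) * μ / (w i))
        ((Finset.filter (fun ℓ => ¬ ℓ = 0) (Finset.range (w i))).val) := by
    have lhs : F.val.map s
        = Multiset.filter (fun q => ¬ q = 0) ((Multiset.range μ).map s) := by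
      rw [Multiset.filter_map]
      congr 1
    rw [lhs, hmult', filter_bind']
    apply Multiset.bind_congr
    intro i hi
    rw [Multiset.filter_map]
    rw [Finset.filter_val, Finset.range_val]
    congr 1
    apply Multiset.filter_congr
    intro ℓ hℓ
    have hwi : w i ≠ 0 := by
      have := hw i hi; omega
    have key : (ℓ:ℚ) * μ / (w i) = 0 ↔ ℓ = 0 := by
      rw [div_eq_zero_iff, mul_eq_zero]
      constructor
      · rintro ((h | h) | h)
        · exact_mod_cast h
        · exact absurd h (Nat.cast_ne_zero.2 (by omega))
        · exact absurd h (Nat.cast_ne_zero.2 hwi)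
      · intro h
        left; left
        exact_mod_cast h
    simp only [Function.comp_apply]
    exact not_congr key
  -- card of F
  have hcard : F.card = μ - (n + 1) := by
    have := congrArg Multiset.card E1
    rw [Multiset.card_map, Multiset.card_bind] at this
    have hterm : ∀ i ∈ Finset.range (n+1),
        ((Finset.range (w i)).filter (fun ℓ => ¬ ℓ = 0)).card = w i - 1 := by
      intro i hi
      have : (Finset.range (w i)).filter (fun ℓ => ¬ ℓ = 0) = Finset.Ico 1 (w i) := by
        ext k; simp [Finset.mem_Ico]; omega
      rw [this, Nat.card_Ico]
    simp only [Function.comp_def, Multiset.card_map] at this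
    have hsum1 : (Multiset.map (fun i => Multiset.card
        ((Finset.filter (fun ℓ => ¬ ℓ = 0) (Finset.range (w i))).val))
        (Finset.range (n+1)).val).sum
        = ∑ i ∈ Finset.range (n+1), ((Finset.range (w i)).filter (fun ℓ => ¬ ℓ = 0)).card := rfl
    rw [hsum1] at this
    rw [Finset.sum_congr rfl hterm] at this
    have hsum2 : ∑ i ∈ Finset.range (n+1), (w i - 1) = μ - (n+1) := by
      have e1 : ∑ i ∈ Finset.range (n+1), w i = μ := by
        have e2 : Finset.range (n+1) = insert 0 (Finset.Icc 1 n) := by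
          ext k; simp [Finset.mem_Icc]; omega
        rw [e2, Finset.sum_insert (by simp), hw0, hμ]
      have e3 : ∑ i ∈ Finset.range (n+1), (w i - 1) + ∑ i ∈ Finset.range (n+1), 1
          = ∑ i ∈ Finset.range (n+1), w i := by
        rw [← Finset.sum_add_distrib]
        apply Finset.sum_congr rfl
        intro i hi
        have := hw i hi
        omega
      simp at e3
      omega
    rw [hsum2] at this
    exact this
  -- up-closed
  have hup : ∀ j k, j ∈ F → j ≤ k → k < μ → k ∈ F := by
    intro j k hj hjk hk
    simp only [hFdef, Finset.mem_filter, Finset.mem_range] at hj ⊢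
    refine ⟨hk, ?_⟩
    intro hc
    have h1 : s j ≤ s k := smono hmono j k hjk hk
    have h2 : 0 ≤ s j := hnonneg j (by omega)
    have := hj.2
    apply this
    linarith [hc ▸ h1]
  -- conclude F = Ico (n+1) μ
  have hF : F = Finset.Ico (n + 1) μ := by
    ext k
    simp only [hFdef, Finset.mem_filter, Finset.mem_range, Finset.mem_Ico]
    constructor
    · rintro ⟨hk, hs⟩
      refine ⟨?_, hk⟩
      by_contra hc
      push_neg at hc
      have hsub : Finset.Ico k μ ⊆ F := by
        intro m hm
        simp only [Finset.mem_Ico] at hm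
        exact hup k m (by simp [hFdef, Finset.mem_filter]; exact ⟨hk, hs⟩) hm.1 hm.2
      have := Finset.card_le_card hsub
      rw [Nat.card_Ico, hcard] at this
      omega
    · rintro ⟨h1, h2⟩
      refine ⟨h2, ?_⟩
      by_contra hc
      -- k ∉ F, so F ⊆ Ico (k+1) μ
      have hsub : F ⊆ Finset.Ico (k+1) μ := by
        intro m hm
        simp only [Finset.mem_Ico]
        have hmμ : m < μ := by
          have := Finset.mem_filter.1 hm
          simpa using this.1
        refine ⟨?_, hmμ⟩
        by_contra hc2
        push_neg at hc2
        have := hup m k hm (by omega) h2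
        simp only [hFdef, Finset.mem_filter] at this
        exact this.2 hc
      have := Finset.card_le_card hsub
      rw [Nat.card_Ico, hcard] at this
      omega

  -- Fact B
  have factB : ∀ k, k < μ → k ≤ n → s k = 0 := by
    intro k hk hkn
    by_contra hc
    have : k ∈ F := by
      simp only [hFdef, Finset.mem_filter, Finset.mem_range]
      exact ⟨hk, hc⟩
    rw [hF, Finset.mem_Ico] at this
    omega
  refine ⟨hnμ, factB, ?_⟩
  -- Fact C
  set f := fun i => fun ℓ : ℕ => (ℓ : ℚ) * μ / (w i) with hfdef
  have hT : (Finset.Ico (n+1) μ).val.map s = (Finset.range (n + 1)).val.bind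
      (fun i => Multiset.map (f i) ((Finset.Ico 1 (w i)).val)) := by
    rw [← hF]
    rw [E1]
    apply Multiset.bind_congr
    intro i hi
    congr 2
    ext k; simp [Finset.mem_Ico]; omega
  have hC2 : ((Finset.Ico (n+1) μ).val.map s).map (fun q => (μ:ℚ) - q)
      = (Finset.Ico (n+1) μ).val.map s := by
    rw [hT, Multiset.map_bind]
    apply Multiset.bind_congr
    intro i hi
    have hwi : w i ≠ 0 := by have := hw i hi; omega
    rw [Multiset.map_map]
    have step1 : Multiset.map ((fun q => (μ:ℚ) - q) ∘ f i) (Finset.Ico 1 (w i)).val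
        = Multiset.map ((f i) ∘ (fun ℓ => w i - ℓ)) (Finset.Ico 1 (w i)).val := by
      apply Multiset.map_congr rfl
      intro ℓ hℓ
      have hℓ' : 1 ≤ ℓ ∧ ℓ < w i := by
        rw [Finset.mem_val, Finset.mem_Ico] at hℓ
        exact hℓ
      simp only [Function.comp_apply, hfdef]
      have hcast : ((w i - ℓ : ℕ) : ℚ) = (w i : ℚ) - ℓ := by
        push_cast [Nat.cast_sub (by omega : ℓ ≤ w i)]
        ring
      rw [hcast]
      have hwq : (w i : ℚ) ≠ 0 := Nat.cast_ne_zero.2 hwi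
      field_simp
    rw [step1, ← Multiset.map_map, ico_rev 1 (w i) (w i) (by omega) (by omega)]
  have hg : (Finset.Ico (n+1) μ).val.map (fun k => (μ:ℚ) - s (μ + n - k))
      = (Finset.Ico (n+1) μ).val.map s := by
    have h1 : (Finset.Ico (n+1) μ).val.map (fun k => μ + n - k) = (Finset.Ico (n+1) μ).val :=
      ico_rev (n+1) μ (μ + n) (by omega) (by omega)
    calc (Finset.Ico (n+1) μ).val.map (fun k => (μ:ℚ) - s (μ + n - k))
        = (((Finset.Ico (n+1) μ).val.map (fun k => μ + n - k)).map s).map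
            (fun q => (μ:ℚ) - q) := by
          rw [Multiset.map_map, Multiset.map_map]
          rfl
      _ = (Finset.Ico (n+1) μ).val.map s := by rw [h1, hC2]
  -- lists
  intro k hk1 hk2
  set m := μ - (n + 1) with hmdef
  set L := List.range' (n+1) m with hLdef
  have hIco : (Finset.Ico (n+1) μ).val = ↑L := by rw [Nat.Ico_eq_range']
  set g := fun k => (μ:ℚ) - s (μ + n - k) with hgdef
  rw [hIco, Multiset.map_coe, Multiset.map_coe, Multiset.coe_eq_coe] at hg
  have hLmem : ∀ a ∈ L, n + 1 ≤ a ∧ a < μ := by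
    intro a ha
    rw [hLdef, List.mem_range'_1] at ha
    omega
  have sorted_s : (L.map s).SortedLE := by
    rw [List.sortedLE_iff_pairwise, List.pairwise_map]
    apply List.Pairwise.imp_of_mem ?_ (List.pairwise_lt_range' 1)
    intro a b ha hb hab
    exact smono hmono a b (le_of_lt hab) (hLmem b hb).2
  have sorted_g : (L.map g).SortedLE := by
    rw [List.sortedLE_iff_pairwise, List.pairwise_map]
    apply List.Pairwise.imp_of_mem ?_ (List.pairwise_lt_range' 1)
    intro a b ha hb hab
    have h1 := hLmem a ha
    have h2 := hLmem b hb
    have h3 : s (μ + n - b) ≤ s (μ + n - a) :=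
      smono hmono _ _ (by omega) (by omega)
    simp only [hgdef]
    linarith
  have heq : L.map g = L.map s := List.Perm.eq_of_sortedLE sorted_g sorted_s hg
  have hi : k - (n+1) < m := by omega
  have hL1 : (L.map s).length = m := by rw [List.length_map, hLdef, List.length_range']
  have hL2 : (L.map g).length = m := by rw [List.length_map, hLdef, List.length_range']
  have hidx : (L.map g)[k - (n+1)]'(by omega) = (L.map s)[k - (n+1)]'(by omega) := by
    simp [heq]
  rw [List.getElem_map, List.getElem_map] at hidx
  simp only [hLdef, List.getElem_range'] at hidx
  have h3 : n + 1 + 1 * (k - (n+1)) = k := by omega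
  rw [h3] at hidx
  simp only [hgdef] at hidx
  linarith

/-- for every complex `x`,
`x·(d/dx)A_0(x) = (1/μ)·A_0(x) + [A_0(x), R] + (1/μ)·[A_0(x), A_∞]`. -/
theorem stmt_3 (n : ℕ) (hn : 1 ≤ n) (w : ℕ → ℕ) (hw0 : w 0 = 1)
    (hwpos : ∀ i ∈ Finset.Icc 1 n, 1 ≤ w i)
    (μ : ℕ) (hμ : μ = 1 + ∑ i ∈ Finset.Icc 1 n, w i)
    (s : ℕ → ℚ) (hmono : ∀ k, k + 1 < μ → s k ≤ s (k + 1))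
    (hmult : (Multiset.range μ).map s =
      (Finset.range (n + 1)).val.bind fun i =>
        (Multiset.range (w i)).map fun ℓ => (ℓ : ℚ) * μ / (w i))
    (x : ℂ) :
    ∃ d : Matrix (Fin μ) (Fin μ) ℂ,
      (∀ i j : Fin μ, HasDerivAt (fun y : ℂ => A0 μ y i j) (d i j) x) ∧
      x • d = ((μ : ℂ))⁻¹ • A0 μ x
        + (A0 μ x * Rmat μ n s - Rmat μ n s * A0 μ x)
        + ((μ : ℂ))⁻¹ • (A0 μ x * Ainf μ s - Ainf μ s * A0 μ x) := by
  obtain ⟨hnμ, factB, factC⟩ := keyfacts n hn w hw0 hwpos μ hμ s hmono hmult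
  have hμC : (μ : ℂ) ≠ 0 := Nat.cast_ne_zero.2 (by omega)
  refine ⟨Matrix.of fun i j => if (i:ℕ) = (j:ℕ)+1 ∧ (j:ℕ) = 0 then (μ:ℂ) else 0, ?_, ?_⟩
  · intro i j
    by_cases h : (i:ℕ) = (j:ℕ)+1 ∧ (j:ℕ) = 0
    · have he : (fun y : ℂ => A0 μ y i j) = fun y => (μ:ℂ) * y := by
        funext y; simp [A0, h.1, h.2]
      rw [he, Matrix.of_apply, if_pos h]
      simpa using (hasDerivAt_id x).const_mul (μ:ℂ)
    · have he : (fun y : ℂ => A0 μ y i j) = fun _ => A0 μ 0 i j := by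
        funext y
        simp only [A0, Matrix.of_apply]
        by_cases hc1 : (i:ℕ) = (j:ℕ)+1
        · have hc2 : ¬ (j:ℕ) = 0 := fun hcc => h ⟨hc1, hcc⟩
          simp only [if_pos hc1, if_neg hc2]
        · simp only [if_neg hc1]
      rw [he, Matrix.of_apply, if_neg h]
      exact hasDerivAt_const x _
  · ext i j
    have hiμ : (i:ℕ) < μ := i.2
    have hjμ : (j:ℕ) < μ := j.2
    simp only [Matrix.smul_apply, Matrix.add_apply, Matrix.sub_apply, Rmat, Ainf, A0,
      Matrix.mul_diagonal, Matrix.diagonal_mul, smul_eq_mul, Matrix.of_apply]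
    by_cases h1 : (i:ℕ) = (j:ℕ)+1
    · by_cases h2 : (j:ℕ) = 0
      · have hs0 : s 0 = 0 := factB 0 (by omega) (by omega)
        have hs1 : s 1 = 0 := factB 1 (by omega) (by omega)
        simp only [h1, h2, hs0, hs1]
        norm_num [hn]
        ring
      · by_cases h3 : (j:ℕ)+1 ≤ n
        · have hsj : s (j:ℕ) = 0 := factB _ (by omega) (by omega)
          have hsj1 : s ((j:ℕ)+1) = 0 := factB _ (by omega) (by omega)
          simp only [h1, hsj, hsj1, if_neg h2, if_pos h3,
            if_pos (show (j:ℕ) ≤ n by omega), eq_self_iff_true, true_and, if_true,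
            if_neg (show ¬((j:ℕ)+1 = 0) by omega)]
          field_simp
          push_cast
          ring
        · by_cases h4 : (j:ℕ) ≤ n
          · -- j = n
            have hsj : s (j:ℕ) = 0 := factB _ (by omega) (by omega)
            have hfc := congrArg (fun q : ℚ => (q:ℂ)) (factC ((j:ℕ)+1) (by omega) (by omega))
            push_cast at hfc
            simp only [h1, hsj, if_neg h2, if_neg h3, if_pos h4,
              eq_self_iff_true, true_and, if_true,
              if_neg (show ¬((j:ℕ)+1 = 0) by omega)]
            push_cast
            field_simp
            linear_combination (-1:ℂ) * hfc
          · have hfc1 := congrArg (fun q : ℚ => (q:ℂ)) (factC (j:ℕ) (by omega) (by omega))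
            have hfc2 := congrArg (fun q : ℚ => (q:ℂ)) (factC ((j:ℕ)+1) (by omega) (by omega))
            push_cast at hfc1 hfc2
            simp only [h1, if_neg h2, if_neg h3, if_neg h4,
              eq_self_iff_true, true_and, if_true,
              if_neg (show ¬((j:ℕ)+1 = 0) by omega)]
            push_cast
            field_simp
            linear_combination hfc1 - hfc2
    · by_cases h2 : (i:ℕ) = 0 ∧ (j:ℕ) = μ - 1
      · obtain ⟨hi0, hj0⟩ := h2
        have hs0 : s 0 = 0 := factB 0 (by omega) (by omega)
        by_cases h3 : μ - 1 ≤ n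
        · have hsm : s (μ - 1) = 0 := factB _ (by omega) (by omega)
          simp only [h1, hi0, hj0, hs0, hsm, if_neg h1, if_pos h3,
            if_pos (⟨rfl, rfl⟩ : (0:ℕ) = 0 ∧ μ-1 = μ-1), if_pos (rfl : (0:ℕ) = 0),
            if_neg (show ¬((μ:ℕ) - 1 = 0) by omega),
            if_neg (show ¬((0:ℕ) = (μ-1)+1 ∧ (μ-1 : ℕ) = 0) by omega)]
          push_cast [Nat.cast_sub (by omega : 1 ≤ μ)]
          field_simp
          ring
        · have hidx : μ + n - (μ - 1) = n + 1 := by omega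
          have hfc := congrArg (fun q : ℚ => (q:ℂ)) (factC (μ - 1) (by omega) (by omega))
          rw [hidx] at hfc
          push_cast at hfc
          simp only [h1, hi0, hj0, hs0, hidx, if_neg h1, if_neg h3,
            if_pos (⟨rfl, rfl⟩ : (0:ℕ) = 0 ∧ μ-1 = μ-1), if_pos (rfl : (0:ℕ) = 0),
            if_neg (show ¬((μ:ℕ) - 1 = 0) by omega),
            if_neg (show ¬((0:ℕ) = (μ-1)+1 ∧ (μ-1 : ℕ) = 0) by omega)]
          push_cast [Nat.cast_sub (by omega : 1 ≤ μ)]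
          field_simp
          simp only [and_self, if_true]
          linear_combination (μ:ℂ) * hfc
      · simp only [if_neg h1, if_neg h2,
          if_neg (show ¬((i:ℕ) = (j:ℕ)+1 ∧ (j:ℕ) = 0) by tauto)]
        ring
end
end

section
/- Assume μ ≥ n+2. For every nonzero complex number θ, every eigenvalue λ of the matrix R^ψ − (1/(μθ))·Ā_0^ψ is a real number with −1 < λ ≤ 0; in fact its eigenvalues are 0 (with multiplicity n+1) and −s_{μ+n−k}/μ for n+1 ≤ k ≤ μ−1. -/
open Finset Matrix Polynomial

noncomputable section

/-- The matrix `Ā_0^ψ`: `(Ā_0^ψ)_{k+1,k} = μ` for `k ∈ {0, …, μ−2} \ {n}`,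
`(Ā_0^ψ)_{0,μ−1} = μ`, all other entries `0`. -/
def A0psibar (μ n : ℕ) : Matrix (Fin μ) (Fin μ) ℂ :=
  Matrix.of fun i j =>
    if (i : ℕ) = (j : ℕ) + 1 ∧ (j : ℕ) ≠ n then (μ : ℂ)
    else if (i : ℕ) = 0 ∧ (j : ℕ) = μ - 1 then (μ : ℂ) else 0

/-- The diagonal matrix `R^ψ`: `(R^ψ)_{k,k} = 0` for `0 ≤ k ≤ n`, and
`(R^ψ)_{k,k} = −s_{μ+n−k}/μ` for `n+1 ≤ k ≤ μ−1`. -/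
def Rpsi (μ n : ℕ) (s : ℕ → ℚ) : Matrix (Fin μ) (Fin μ) ℂ :=
  Matrix.diagonal fun k : Fin μ =>
    if (k : ℕ) ≤ n then 0 else -((s (μ + n - (k : ℕ)) : ℚ) : ℂ) / (μ : ℂ)

/-- assume `μ ≥ n+2`. For every `θ ≠ 0`, the characteristic polynomial of
`R^ψ − (1/(μθ))·Ā_0^ψ` is `X^{n+1}·∏_{k=n+1}^{μ−1}(X + s_{μ+n−k}/μ)` (so its eigenvalues
are `0` with multiplicity `n+1` and the `−s_{μ+n−k}/μ`), and every eigenvalue is a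
real number `λ` with `−1 < λ ≤ 0`. -/
theorem stmt_6 (n : ℕ) (hn : 1 ≤ n) (w : ℕ → ℕ) (hw0 : w 0 = 1)
    (hwpos : ∀ i ∈ Finset.Icc 1 n, 1 ≤ w i)
    (μ : ℕ) (hμ : μ = 1 + ∑ i ∈ Finset.Icc 1 n, w i)
    (hμn : n + 2 ≤ μ)
    (s : ℕ → ℚ) (hmono : ∀ k, k + 1 < μ → s k ≤ s (k + 1))
    (hmult : (Multiset.range μ).map s =
      (Finset.range (n + 1)).val.bind fun i =>
        (Multiset.range (w i)).map fun ℓ => (ℓ : ℚ) * μ / (w i))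
    (θ : ℂ) (hθ : θ ≠ 0) :
    (Rpsi μ n s - ((μ : ℂ) * θ)⁻¹ • A0psibar μ n).charpoly
      = X ^ (n + 1) *
        ∏ k ∈ Finset.Ico (n + 1) μ, (X - C (-((s (μ + n - k) : ℚ) : ℂ) / (μ : ℂ))) ∧
    ∀ lam ∈ spectrum ℂ (Rpsi μ n s - ((μ : ℂ) * θ)⁻¹ • A0psibar μ n),
      ∃ r : ℝ, lam = (r : ℂ) ∧ -1 < r ∧ r ≤ 0 := by
  set M : Matrix (Fin μ) (Fin μ) ℂ := Rpsi μ n s - ((μ : ℂ) * θ)⁻¹ • A0psibar μ n with hM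
  -- diagonal entries
  have hdiag : ∀ k : Fin μ, M k k
      = if (k : ℕ) ≤ n then 0 else -((s (μ + n - (k : ℕ)) : ℚ) : ℂ) / (μ : ℂ) := by
    intro k
    have hk := k.isLt
    have hA : A0psibar μ n k k = 0 := by
      simp only [A0psibar, of_apply]
      rw [if_neg (by omega), if_neg (by omega)]
    simp [hM, Rpsi, Matrix.sub_apply, Matrix.smul_apply, hA, Matrix.diagonal_apply_eq]
  -- off-diagonal zeros
  have hzero : ∀ i j : Fin μ, (i : ℕ) ≠ (j : ℕ) →
      ¬((i : ℕ) = (j : ℕ) + 1 ∧ (j : ℕ) ≠ n) → ¬((i : ℕ) = 0 ∧ (j : ℕ) = μ - 1) →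
      M i j = 0 := by
    intro i j h1 h2 h3
    have hij : i ≠ j := fun h => h1 (by rw [h])
    have hA : A0psibar μ n i j = 0 := by
      simp only [A0psibar, of_apply]
      rw [if_neg h2, if_neg h3]
    simp [hM, Rpsi, Matrix.sub_apply, Matrix.smul_apply, hA, Matrix.diagonal_apply_ne _ hij]
  have hcm_zero : ∀ i j : Fin μ, (i : ℕ) ≠ (j : ℕ) →
      ¬((i : ℕ) = (j : ℕ) + 1 ∧ (j : ℕ) ≠ n) → ¬((i : ℕ) = 0 ∧ (j : ℕ) = μ - 1) →
      charmatrix M i j = 0 := by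
    intro i j h1 h2 h3
    have hij : i ≠ j := fun h => h1 (by rw [h])
    rw [charmatrix_apply_ne _ _ _ hij, hzero i j h1 h2 h3, map_zero, neg_zero]
  have key : M.charpoly
      = X ^ (n + 1) *
        ∏ k ∈ Finset.Ico (n + 1) μ, (X - C (-((s (μ + n - k) : ℚ) : ℂ) / (μ : ℂ))) := by
    rw [Matrix.charpoly]
    rw [Matrix.twoBlockTriangular_det (charmatrix M) (fun i => (i : ℕ) ≤ n)
      (fun i hi j hj => hcm_zero i j (by omega) (by omega) (by omega))]
    have hblock1 : (Matrix.toSquareBlockProp (charmatrix M) fun i : Fin μ => (i : ℕ) ≤ n).det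
        = X ^ (n + 1) := by
      rw [Matrix.det_of_lowerTriangular]
      · have e : {a : Fin μ // (a : ℕ) ≤ n} ≃ Fin (n + 1) :=
          { toFun := fun a => ⟨(a.1 : ℕ), by have := a.2; omega⟩
            invFun := fun b => ⟨⟨(b : ℕ), by have := b.isLt; omega⟩, by
              simpa using Nat.lt_succ_iff.mp b.isLt⟩
            left_inv := fun a => by ext; simp
            right_inv := fun b => by ext; simp }
        have hcard : Fintype.card {a : Fin μ // (a : ℕ) ≤ n} = n + 1 := by
          rw [Fintype.card_congr e, Fintype.card_fin]
        calc ∏ i : {a : Fin μ // (a : ℕ) ≤ n},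
              (Matrix.toSquareBlockProp (charmatrix M) fun i : Fin μ => (i : ℕ) ≤ n) i i
            = ∏ _i : {a : Fin μ // (a : ℕ) ≤ n}, (X : ℂ[X]) := by
              refine Finset.prod_congr rfl fun i _ => ?_
              show charmatrix M i.1 i.1 = X
              rw [charmatrix_apply_eq, hdiag, if_pos i.2, map_zero, sub_zero]
          _ = X ^ (n + 1) := by rw [Finset.prod_const, Finset.card_univ, hcard]
      · intro i j hij
        have hvlt : (i.1 : ℕ) < (j.1 : ℕ) := by
          have : (j : {a : Fin μ // (a : ℕ) ≤ n}) > i := hij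
          exact this
        show charmatrix M i.1 j.1 = 0
        exact hcm_zero _ _ (by omega) (by omega) (by have := j.2; omega)
    have hblock2 : (Matrix.toSquareBlockProp (charmatrix M) fun i : Fin μ => ¬(i : ℕ) ≤ n).det
        = ∏ k ∈ Finset.Ico (n + 1) μ, (X - C (-((s (μ + n - k) : ℚ) : ℂ) / (μ : ℂ))) := by
      rw [Matrix.det_of_lowerTriangular]
      · refine Finset.prod_bij' (fun a _ => (a.1 : ℕ))
          (fun k hk => ⟨⟨k, (Finset.mem_Ico.mp hk).2⟩, by
            show ¬ k ≤ n
            have := (Finset.mem_Ico.mp hk).1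
            omega⟩)
          ?_ ?_ ?_ ?_ ?_
        · intro a _
          have := a.2
          have := a.1.isLt
          simp only [Finset.mem_Ico]; omega
        · intro k hk; exact Finset.mem_univ _
        · intro a _; ext; simp
        · intro k hk; simp
        · intro a _
          show charmatrix M a.1 a.1 = _
          rw [charmatrix_apply_eq, hdiag, if_neg a.2]
      · intro i j hij
        have hvlt : (i.1 : ℕ) < (j.1 : ℕ) := by
          have : (j : {a : Fin μ // ¬(a : ℕ) ≤ n}) > i := hij
          exact this
        show charmatrix M i.1 j.1 = 0
        exact hcm_zero _ _ (by omega) (by omega) (by have := i.2; omega)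
    rw [hblock1, hblock2]
  refine ⟨key, ?_⟩
  -- bounds on s
  have hsbound : ∀ m, m < μ → 0 ≤ s m ∧ s m < μ := by
    intro m hm
    have hmem : s m ∈ (Multiset.range μ).map s :=
      Multiset.mem_map.mpr ⟨m, Multiset.mem_range.mpr hm, rfl⟩
    rw [hmult] at hmem
    obtain ⟨i, hi, hmem'⟩ := Multiset.mem_bind.mp hmem
    obtain ⟨ℓ, hℓ, hval⟩ := Multiset.mem_map.mp hmem'
    obtain ⟨ℓ', hℓ'w, rfl⟩ : ∃ a : ℕ, a < w i ∧ (a : ℚ) = ℓ := by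
      simpa [Multiset.mem_bind, Multiset.mem_range, eq_comm] using hℓ
    have hℓw : ℓ' < w i := hℓ'w
    have hwi : 1 ≤ w i := by
      rcases Nat.eq_zero_or_pos i with h0 | h0
      · rw [h0, hw0]
      · exact hwpos i (Finset.mem_Icc.mpr ⟨h0, by
          have := Finset.mem_range.mp (by exact_mod_cast hi); omega⟩)
    have hwiQ : (0 : ℚ) < (w i : ℚ) := by exact_mod_cast hwi
    have hμQ : (0 : ℚ) < (μ : ℚ) := by exact_mod_cast (by omega : 0 < μ)
    constructor
    · rw [← hval]
      positivity
    · rw [← hval, div_lt_iff₀ hwiQ]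
      have hℓQ : ((ℓ' : ℕ) : ℚ) < (w i : ℚ) := by exact_mod_cast hℓw
      calc ((ℓ' : ℕ) : ℚ) * μ < (w i : ℚ) * μ := by
            exact mul_lt_mul_of_pos_right hℓQ hμQ
        _ = (μ : ℚ) * (w i) := mul_comm _ _
  -- spectrum
  intro lam hlam
  have hnu : ¬ IsUnit (algebraMap ℂ (Matrix (Fin μ) (Fin μ) ℂ) lam - M) :=
    spectrum.mem_iff.mp hlam
  have hdet0 : (algebraMap ℂ (Matrix (Fin μ) (Fin μ) ℂ) lam - M).det = 0 := by
    by_contra h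
    exact hnu ((Matrix.isUnit_iff_isUnit_det _).mpr (Ne.isUnit h))
  have heval : (M.charpoly).eval lam = (algebraMap ℂ (Matrix (Fin μ) (Fin μ) ℂ) lam - M).det := by
    rw [Matrix.charpoly]
    have : (Polynomial.evalRingHom lam) (charmatrix M).det
        = ((charmatrix M).map (Polynomial.evalRingHom lam)).det := RingHom.map_det _ _
    rw [show Polynomial.eval lam (charmatrix M).det
        = (Polynomial.evalRingHom lam) (charmatrix M).det from rfl, this]
    congr 1
    ext i j
    by_cases hij : i = j
    · subst hij
      simp [charmatrix_apply_eq, Matrix.algebraMap_matrix_apply]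
    · simp [charmatrix_apply_ne _ _ _ hij, Matrix.algebraMap_matrix_apply, hij]
  have hroot : lam ^ (n + 1) *
      ∏ k ∈ Finset.Ico (n + 1) μ, (lam - (-((s (μ + n - k) : ℚ) : ℂ) / (μ : ℂ))) = 0 := by
    have := heval.trans hdet0
    rw [key] at this
    simpa [eval_mul, eval_pow, eval_prod] using this
  rcases mul_eq_zero.mp hroot with h | h
  · refine ⟨0, ?_, by norm_num, le_refl 0⟩
    have : lam = 0 := by
      exact pow_eq_zero_iff (Nat.succ_ne_zero n) |>.mp h
    simp [this]
  · obtain ⟨k, hk, hk0⟩ := Finset.prod_eq_zero_iff.mp h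
    have hlam_eq : lam = -((s (μ + n - k) : ℚ) : ℂ) / (μ : ℂ) := sub_eq_zero.mp hk0
    obtain ⟨hk1, hk2⟩ := Finset.mem_Ico.mp hk
    have hmlt : μ + n - k < μ := by omega
    obtain ⟨hs0, hs1⟩ := hsbound (μ + n - k) hmlt
    have hμR : (0 : ℝ) < (μ : ℝ) := by exact_mod_cast (by omega : 0 < μ)
    have hs0R : (0 : ℝ) ≤ ((s (μ + n - k) : ℚ) : ℝ) := by exact_mod_cast hs0
    have hs1R : ((s (μ + n - k) : ℚ) : ℝ) < (μ : ℝ) := by exact_mod_cast hs1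
    refine ⟨-((s (μ + n - k) : ℚ) : ℝ) / (μ : ℝ), ?_, ?_, ?_⟩
    · rw [hlam_eq]
      push_cast
      ring
    · have hlt : ((s (μ + n - k) : ℚ) : ℝ) / (μ : ℝ) < 1 := (div_lt_one hμR).mpr hs1R
      rw [neg_div]
      linarith
    · have hge : (0 : ℝ) ≤ ((s (μ + n - k) : ℚ) : ℝ) / (μ : ℝ) := div_nonneg hs0R hμR.le
      rw [neg_div]
      linarith
end
end

section
/- For real x ∈ (0,1], define x^R = diag(x^{R_{0,0}}, …, x^{R_{μ−1,μ−1}}) using real powers, and set A_0^{flat}(x) = x^R A_0(x) x^{−R}. Then every entry of A_0^{flat}(x) converges to a finite limit as x → 0⁺ (so the matrix-valued map x ↦ A_0^{flat}(x) extends continuously to x = 0); this holds because the sequence (s_k) is nondecreasing. -/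
open Finset Matrix Real

noncomputable section

/-- The real matrix `A_0(x)`: `A_0(x)_{1,0} = μx`, `A_0(x)_{k+1,k} = μ` for
`1 ≤ k ≤ μ−2`, `A_0(x)_{0,μ−1} = μ`, all other entries `0`. -/
def A0R (μ : ℕ) (x : ℝ) : Matrix (Fin μ) (Fin μ) ℝ :=
  Matrix.of fun i j =>
    if (i : ℕ) = (j : ℕ) + 1 then (if (j : ℕ) = 0 then (μ : ℝ) * x else (μ : ℝ))
    else if (i : ℕ) = 0 ∧ (j : ℕ) = μ - 1 then (μ : ℝ) else 0

/-- The diagonal entries of `R`: `R_{0,0} = 0`, `R_{k,k} = −1` for `1 ≤ k ≤ n`, and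
`R_{k,k} = −s_{μ+n−k}/μ` for `n+1 ≤ k ≤ μ−1`. -/
def rdiag (μ n : ℕ) (s : ℕ → ℚ) : Fin μ → ℝ := fun k =>
  if (k : ℕ) = 0 then 0
  else if (k : ℕ) ≤ n then -1
  else -((s (μ + n - (k : ℕ)) : ℚ) : ℝ) / (μ : ℝ)

/-- `A_0^{flat}(x) = x^R A_0(x) x^{−R}` for real `x > 0`, where
`x^R = diag(x^{R_{0,0}}, …, x^{R_{μ−1,μ−1}})` (real powers). -/
def A0flat (μ n : ℕ) (s : ℕ → ℚ) (x : ℝ) : Matrix (Fin μ) (Fin μ) ℝ :=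
  Matrix.diagonal (fun k : Fin μ => x ^ (rdiag μ n s k)) * A0R μ x *
    Matrix.diagonal (fun k : Fin μ => x ^ (-(rdiag μ n s k)))

/-- Auxiliary: if a function agrees with `c * x ^ e` (real power, `e ≥ 0`) on
`Ioi 0`, then it converges as `x → 0⁺`. -/
lemma aux_tendsto (c e : ℝ) (he : 0 ≤ e) (f : ℝ → ℝ)
    (hf : ∀ x ∈ Set.Ioi (0:ℝ), f x = c * x ^ e) :
    ∃ L : ℝ, Filter.Tendsto f (nhdsWithin 0 (Set.Ioi 0)) (nhds L) := by
  refine ⟨c * (0:ℝ) ^ e, ?_⟩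
  have h : Filter.Tendsto (fun x : ℝ => c * x ^ e) (nhdsWithin 0 (Set.Ioi 0))
      (nhds (c * (0:ℝ) ^ e)) :=
    (((Real.continuousAt_rpow_const 0 e (Or.inr he)).tendsto).mono_left
      nhdsWithin_le_nhds).const_mul c
  refine h.congr' ?_
  filter_upwards [self_mem_nhdsWithin] with x hx using (hf x hx).symm

/-- every entry of `A_0^{flat}(x)` converges to a finite limit as
`x → 0⁺`. -/
theorem stmt_7 (n : ℕ) (hn : 1 ≤ n) (w : ℕ → ℕ) (hw0 : w 0 = 1)
    (hwpos : ∀ i ∈ Finset.Icc 1 n, 1 ≤ w i)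
    (μ : ℕ) (hμ : μ = 1 + ∑ i ∈ Finset.Icc 1 n, w i)
    (s : ℕ → ℚ) (hmono : ∀ k, k + 1 < μ → s k ≤ s (k + 1))
    (hmult : (Multiset.range μ).map s =
      (Finset.range (n + 1)).val.bind fun i =>
        (Multiset.range (w i)).map fun ℓ => (ℓ : ℚ) * μ / (w i)) :
    ∀ i j : Fin μ, ∃ L : ℝ,
      Filter.Tendsto (fun x : ℝ => A0flat μ n s x i j)
        (nhdsWithin 0 (Set.Ioi 0)) (nhds L) := by
  -- μ ≥ n + 1
  have hμn : n + 1 ≤ μ := by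
    have h1 : n ≤ ∑ i ∈ Finset.Icc 1 n, w i := by
      calc n = ∑ i ∈ Finset.Icc 1 n, 1 := by simp
        _ ≤ ∑ i ∈ Finset.Icc 1 n, w i := Finset.sum_le_sum hwpos
    omega
  have hμpos : 0 < μ := by omega
  have hμR : (0:ℝ) < (μ:ℝ) := by exact_mod_cast hμpos
  -- bounds on s
  have hsb : ∀ k, k < μ → 0 ≤ s k ∧ s k ≤ (μ:ℚ) := by
    intro k hk
    have hmem : s k ∈ (Multiset.range μ).map s :=
      Multiset.mem_map.2 ⟨k, Multiset.mem_range.2 hk, rfl⟩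
    rw [hmult] at hmem
    rcases Multiset.mem_bind.1 hmem with ⟨i, hi, hmem2⟩
    have hiN : i < n + 1 := Finset.mem_range.1 (by exact_mod_cast hi)
    obtain ⟨ℓ, hℓN, hval⟩ : ∃ ℓ : ℕ, ℓ < w i ∧ (ℓ:ℚ) * μ / (w i) = s k := by
      simpa [Multiset.mem_map, Multiset.mem_range] using hmem2
    have hwi : 1 ≤ w i := by
      rcases Nat.eq_zero_or_pos i with h0 | h0
      · rw [h0, hw0]
      · exact hwpos i (Finset.mem_Icc.2 ⟨h0, by omega⟩)
    have hwiQ : (0:ℚ) < (w i : ℚ) := by exact_mod_cast hwi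
    have hμQ : (0:ℚ) ≤ (μ:ℚ) := by positivity
    constructor
    · rw [← hval]; positivity
    · rw [← hval, div_le_iff₀ hwiQ]
      have hℓQ : (ℓ:ℚ) ≤ (w i : ℚ) := by exact_mod_cast hℓN.le
      nlinarith
  intro i j
  -- entry formula
  have hentry : ∀ x : ℝ, A0flat μ n s x i j =
      x ^ (rdiag μ n s i) * A0R μ x i j * x ^ (-(rdiag μ n s j)) := by
    intro x
    simp [A0flat, Matrix.mul_diagonal, Matrix.diagonal_mul]
  have hiμ : (i:ℕ) < μ := i.isLt
  have hjμ : (j:ℕ) < μ := j.isLt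
  by_cases h1 : (i:ℕ) = (j:ℕ) + 1
  · by_cases h0 : (j:ℕ) = 0
    · -- entry (1,0): equals μ on Ioi 0
      refine aux_tendsto (μ:ℝ) 0 le_rfl _ ?_
      intro x hx
      have hx0 : (0:ℝ) < x := hx
      have hri : rdiag μ n s i = -1 := by
        simp only [rdiag]
        rw [if_neg (by omega), if_pos (by omega)]
      have hrj : rdiag μ n s j = 0 := by
        simp only [rdiag]; rw [if_pos h0]
      rw [hentry, hri, hrj, neg_zero, Real.rpow_zero, Real.rpow_neg_one]
      simp only [A0R, Matrix.of_apply, if_pos h1, if_pos h0]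
      field_simp
    · -- entry (j+1, j), j ≥ 1: equals μ * x ^ (r i - r j)
      refine aux_tendsto (μ:ℝ) (rdiag μ n s i - rdiag μ n s j) ?_ _ ?_
      · -- nonnegativity of exponent
        by_cases hin : (i:ℕ) ≤ n
        · have hri : rdiag μ n s i = -1 := by
            simp only [rdiag]; rw [if_neg (by omega), if_pos hin]
          have hrj : rdiag μ n s j = -1 := by
            simp only [rdiag]; rw [if_neg h0, if_pos (by omega)]
          rw [hri, hrj]; norm_num
        · by_cases hjn : (j:ℕ) ≤ n
          · -- j = n, i = n+1
            have hri : rdiag μ n s i = -((s (μ + n - (i:ℕ)) : ℚ) : ℝ) / (μ:ℝ) := by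
              simp only [rdiag]; rw [if_neg (by omega), if_neg hin]
            have hrj : rdiag μ n s j = -1 := by
              simp only [rdiag]; rw [if_neg h0, if_pos hjn]
            have hidx : μ + n - (i:ℕ) = μ - 1 := by omega
            have hb := (hsb (μ - 1) (by omega)).2
            have hbR : ((s (μ - 1) : ℚ) : ℝ) ≤ (μ:ℝ) := by exact_mod_cast hb
            rw [hri, hrj, hidx]
            rw [sub_nonneg, neg_div, neg_le_neg_iff, div_le_one hμR]
            exact hbR
          · -- j > n
            have hri : rdiag μ n s i = -((s (μ + n - (i:ℕ)) : ℚ) : ℝ) / (μ:ℝ) := by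
              simp only [rdiag]; rw [if_neg (by omega), if_neg hin]
            have hrj : rdiag μ n s j = -((s (μ + n - (j:ℕ)) : ℚ) : ℝ) / (μ:ℝ) := by
              simp only [rdiag]; rw [if_neg h0, if_neg hjn]
            have hidx : μ + n - (i:ℕ) + 1 = μ + n - (j:ℕ) := by omega
            have hlt : (μ + n - (i:ℕ)) + 1 < μ := by omega
            have hm := hmono (μ + n - (i:ℕ)) hlt
            rw [hidx] at hm
            have hmR : ((s (μ + n - (i:ℕ)) : ℚ) : ℝ) ≤ ((s (μ + n - (j:ℕ)) : ℚ) : ℝ) := by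
              exact_mod_cast hm
            rw [hri, hrj, sub_nonneg, neg_div, neg_div, neg_le_neg_iff]
            gcongr
      · intro x hx
        have hx0 : (0:ℝ) < x := hx
        rw [hentry]
        simp only [A0R, Matrix.of_apply, if_pos h1, if_neg h0]
        rw [sub_eq_add_neg, Real.rpow_add hx0]
        ring
  · by_cases h2 : (i:ℕ) = 0 ∧ (j:ℕ) = μ - 1
    · -- entry (0, μ-1): equals μ * x ^ (-(r j))
      refine aux_tendsto (μ:ℝ) (-(rdiag μ n s j)) ?_ _ ?_
      · obtain ⟨hi0, hjval⟩ := h2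
        by_cases hjn : (j:ℕ) ≤ n
        · have hrj : rdiag μ n s j = -1 := by
            simp only [rdiag]; rw [if_neg (by omega), if_pos hjn]
          rw [hrj]; norm_num
        · have hrj : rdiag μ n s j = -((s (μ + n - (j:ℕ)) : ℚ) : ℝ) / (μ:ℝ) := by
            simp only [rdiag]; rw [if_neg (by omega), if_neg hjn]
          have hidx : μ + n - (j:ℕ) = n + 1 := by omega
          have hb := (hsb (n + 1) (by omega)).1
          have hbR : (0:ℝ) ≤ ((s (n + 1) : ℚ) : ℝ) := by exact_mod_cast hb
          rw [hrj, hidx, neg_div, neg_neg]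
          positivity
      · intro x hx
        have hx0 : (0:ℝ) < x := hx
        have hri : rdiag μ n s i = 0 := by
          simp only [rdiag]; rw [if_pos h2.1]
        rw [hentry, hri, Real.rpow_zero]
        simp only [A0R, Matrix.of_apply, if_neg h1, if_pos h2]
        ring
    · -- zero entry
      refine aux_tendsto 0 0 le_rfl _ ?_
      intro x hx
      rw [hentry]
      simp only [A0R, Matrix.of_apply, if_neg h1, if_neg h2]
      ring
end
end

section
/- The tuple (ℂ^μ, [A_0], A_∞, G) is a Frobenius type structure on a point; concretely: G is symmetric and invertible, [A_0]ᵀ G = G [A_0] (i.e. [A_0] is self-adjoint with respect to G), and A_∞ᵀ G + G A_∞ = n·G (i.e. A_∞ + A_∞* = n·Id with respect to G). -/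
open Finset Matrix

noncomputable section

def A0lim (μ : ℕ) (s : ℕ → ℚ) : Matrix (Fin μ) (Fin μ) ℂ :=
  Matrix.of fun i j =>
    if (i : ℕ) = (j : ℕ) + 1 ∧ s ((j : ℕ) + 1) = s (j : ℕ) then (μ : ℂ) else 0

def Gmat (μ n : ℕ) : Matrix (Fin μ) (Fin μ) ℂ :=
  Matrix.of fun i j =>
    if (i : ℕ) + (j : ℕ) = n ∨ (i : ℕ) + (j : ℕ) = μ + n then 1 else 0


private lemma aux_map_range (m : ℕ) (τ : ℕ → ℕ) (hmem : ∀ k < m, τ k < m)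
    (hinj : ∀ a < m, ∀ b < m, τ a = τ b → a = b) :
    (Multiset.range m).map τ = Multiset.range m := by
  have hnd : ((Multiset.range m).map τ).Nodup :=
    (Multiset.nodup_range m).map_on fun a ha b hb h =>
      hinj a (Multiset.mem_range.mp ha) b (Multiset.mem_range.mp hb) h
  have hsub : (⟨(Multiset.range m).map τ, hnd⟩ : Finset ℕ) ⊆ Finset.range m := by
    intro x hx
    rw [Finset.mem_mk, Multiset.mem_map] at hx
    obtain ⟨a, ha, rfl⟩ := hx
    exact Finset.mem_range.mpr (hmem a (Multiset.mem_range.mp ha))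
  have hcard : (Finset.range m).card ≤ (⟨(Multiset.range m).map τ, hnd⟩ : Finset ℕ).card := by
    simp [Finset.card_range, Finset.card_mk]
  have h := Finset.eq_of_subset_of_card_le hsub hcard
  have h2 := congrArg Finset.val h
  simpa using h2

private lemma aux_sorted (m : ℕ) (g : ℕ → ℚ) (h : ∀ k, k + 1 < m → g k ≤ g (k + 1)) :
    ((List.range m).map g).Pairwise (· ≤ ·) := by
  have hmono : ∀ a b, a ≤ b → b < m → g a ≤ g b := by
    intro a b hab hbm
    induction b with
    | zero => obtain rfl := Nat.le_zero.mp hab; exact le_rfl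
    | succ b ih =>
      rcases Nat.lt_or_ge a (b + 1) with hlt | hge
      · exact le_trans (ih (by omega) (by omega)) (h b hbm)
      · obtain rfl : a = b + 1 := by omega
        exact le_rfl
  rw [List.pairwise_map]
  apply List.Pairwise.imp_of_mem ?_ (List.pairwise_lt_range : List.Pairwise (· < ·) (List.range m))
  intro a b ha hb hab
  exact hmono a b (le_of_lt hab) (List.mem_range.mp hb)

/-- `(ℂ^μ, [A_0], A_∞, G)` is a Frobenius type structure on a point:
`G` is symmetric and invertible, `[A_0]` is `G`-self-adjoint, and
`A_∞ + A_∞^* = n·Id` with respect to `G`. -/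
theorem stmt_10 (n : ℕ) (hn : 1 ≤ n) (w : ℕ → ℕ) (hw0 : w 0 = 1)
    (hwpos : ∀ i ∈ Finset.Icc 1 n, 1 ≤ w i)
    (μ : ℕ) (hμ : μ = 1 + ∑ i ∈ Finset.Icc 1 n, w i)
    (s : ℕ → ℚ) (hmono : ∀ k, k + 1 < μ → s k ≤ s (k + 1))
    (hmult : (Multiset.range μ).map s =
      (Finset.range (n + 1)).val.bind fun i =>
        (Multiset.range (w i)).map fun ℓ => (ℓ : ℚ) * μ / (w i)) :
    (Gmat μ n)ᵀ = Gmat μ n ∧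
    IsUnit (Gmat μ n) ∧
    (A0lim μ s)ᵀ * Gmat μ n = Gmat μ n * A0lim μ s ∧
    (Ainf μ s)ᵀ * Gmat μ n + Gmat μ n * Ainf μ s = (n : ℂ) • Gmat μ n := by
  -- basic size facts
  have hnμ : n < μ := by
    have h1 : n ≤ ∑ i ∈ Finset.Icc 1 n, w i := by
      calc n = ∑ i ∈ Finset.Icc 1 n, 1 := by simp
        _ ≤ ∑ i ∈ Finset.Icc 1 n, w i := Finset.sum_le_sum hwpos
    omega
  have hμQ : (0 : ℚ) < (μ : ℚ) := by exact_mod_cast (by omega : 0 < μ)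
  have hwge : ∀ i ∈ Finset.range (n + 1), 1 ≤ w i := by
    intro i hi
    rw [Finset.mem_range] at hi
    rcases Nat.eq_zero_or_pos i with h0 | h0
    · rw [h0, hw0]
    · exact hwpos i (Finset.mem_Icc.mpr ⟨h0, by omega⟩)
  have hmult' : (Multiset.range μ).map s
      = (Finset.range (n + 1)).val.bind
          (fun i => (Multiset.range (w i)).map fun ℓ : ℕ => (ℓ : ℚ) * μ / (w i)) := by
    rw [hmult]
    congr 1
    funext i
    simp [Multiset.map_map]
  have hb : ∀ k < μ, 0 ≤ s k ∧ s k < (μ : ℚ) := by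
    intro k hk
    have hmem : s k ∈ (Multiset.range μ).map s :=
      Multiset.mem_map.mpr ⟨k, Multiset.mem_range.mpr hk, rfl⟩
    rw [hmult', Multiset.mem_bind] at hmem
    obtain ⟨i, hi, hmem⟩ := hmem
    rw [Multiset.mem_map] at hmem
    obtain ⟨ℓ, hℓ, heq⟩ := hmem
    rw [Multiset.mem_range] at hℓ
    have hwi : 1 ≤ w i := hwge i (by rwa [← Finset.mem_val])
    have hwQ : (0 : ℚ) < (w i : ℚ) := by exact_mod_cast hwi
    constructor
    · rw [← heq]; positivity
    · rw [← heq, div_lt_iff₀ hwQ]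
      have hℓQ : (ℓ : ℚ) < (w i : ℚ) := by exact_mod_cast hℓ
      nlinarith
  have hmono' : ∀ a b, a ≤ b → b < μ → s a ≤ s b := by
    intro a b hab hbm
    induction b with
    | zero => obtain rfl := Nat.le_zero.mp hab; exact le_rfl
    | succ b ih =>
      rcases Nat.lt_or_ge a (b + 1) with hlt | hge
      · exact le_trans (ih (by omega) (by omega)) (hmono b hbm)
      · obtain rfl : a = b + 1 := by omega
        exact le_rfl
  -- count of zeros
  have hcount : Multiset.count (0 : ℚ) ((Multiset.range μ).map s) = n + 1 := by
    rw [hmult', Multiset.count_bind]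
    have h1 : Multiset.map
        (fun i => Multiset.count (0 : ℚ)
          ((Multiset.range (w i)).map fun ℓ : ℕ => (ℓ : ℚ) * μ / (w i)))
        (Finset.range (n + 1)).val
        = Multiset.map (fun _ => 1) (Finset.range (n + 1)).val := by
      apply Multiset.map_congr rfl
      intro i hi
      rw [Finset.mem_val] at hi
      have hwi : 1 ≤ w i := hwge i hi
      have hwQ : (0 : ℚ) < (w i : ℚ) := by exact_mod_cast hwi
      rw [Multiset.count_map]
      have hiff : ∀ ℓ ∈ Multiset.range (w i), ((0 : ℚ) = (ℓ : ℚ) * μ / (w i)) ↔ ℓ = 0 := by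
        intro ℓ _
        constructor
        · intro h
          by_contra hne
          have hp : (0 : ℚ) < (ℓ : ℚ) * μ / (w i) := by
            have hl : (0 : ℚ) < (ℓ : ℚ) := by exact_mod_cast Nat.pos_of_ne_zero hne
            positivity
          rw [← h] at hp
          exact lt_irrefl 0 hp
        · rintro rfl; simp
      rw [Multiset.filter_congr hiff, Multiset.filter_eq', Multiset.card_replicate,
        Multiset.count_eq_one_of_mem (Multiset.nodup_range _)
          (Multiset.mem_range.mpr (by omega))]
    rw [h1]
    simp
    omega
  have hZ : (Finset.range μ).filter (fun k => s k = 0) = Finset.range (n + 1) := by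
    have hcard2 : ((Finset.range μ).filter (fun k => s k = 0)).card = n + 1 := by
      rw [← hcount, Multiset.count_map, Finset.card, Finset.filter_val, Finset.range_val]
      congr 1
      apply Multiset.filter_congr
      intro x _
      exact eq_comm
    have hsub2 : Finset.range (n + 1) ⊆ (Finset.range μ).filter (fun k => s k = 0) := by
      intro k hk
      rw [Finset.mem_range] at hk
      by_contra hke
      have hdown : (Finset.range μ).filter (fun k => s k = 0) ⊆ Finset.range k := by
        intro a ha
        rw [Finset.mem_filter, Finset.mem_range] at ha
        rw [Finset.mem_range]
        by_contra hak
        push_neg at hak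
        have h1 : s k ≤ s a := hmono' k a hak ha.1
        have h2 : 0 ≤ s k := (hb k (by omega)).1
        exact hke (Finset.mem_filter.mpr ⟨Finset.mem_range.mpr (by omega), by
          rw [ha.2] at h1; linarith⟩)
      have hcle := Finset.card_le_card hdown
      rw [hcard2, Finset.card_range] at hcle
      omega
    exact (Finset.eq_of_subset_of_card_le hsub2 (le_of_eq (by
      rw [hcard2, Finset.card_range]))).symm
  have hz : ∀ k ≤ n, s k = 0 := by
    intro k hk
    have : k ∈ (Finset.range μ).filter (fun k => s k = 0) := by
      rw [hZ, Finset.mem_range]; omega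
    exact (Finset.mem_filter.mp this).2
  have hpos : ∀ k, n < k → k < μ → 0 < s k := by
    intro k hk1 hk2
    have hne : s k ≠ 0 := by
      intro hc
      have : k ∈ (Finset.range μ).filter (fun k => s k = 0) :=
        Finset.mem_filter.mpr ⟨Finset.mem_range.mpr hk2, hc⟩
      rw [hZ, Finset.mem_range] at this
      omega
    exact lt_of_le_of_ne (hb k hk2).1 (Ne.symm hne)
  -- the symmetry x ↦ μ - x of the nonzero spectrum
  set f : ℚ → ℚ := fun x => if x = 0 then 0 else (μ : ℚ) - x with hf
  have hMf : ((Multiset.range μ).map s).map f = (Multiset.range μ).map s := by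
    rw [hmult', Multiset.map_bind]
    apply Multiset.bind_congr
    intro i hi
    rw [Finset.mem_val] at hi
    have hwi : 1 ≤ w i := hwge i hi
    have hwQ : (0 : ℚ) < (w i : ℚ) := by exact_mod_cast hwi
    set τ : ℕ → ℕ := fun ℓ => if ℓ = 0 then 0 else w i - ℓ with hτ
    rw [Multiset.map_map]
    have hcomp : ∀ ℓ ∈ Multiset.range (w i),
        (f ∘ fun ℓ : ℕ => (ℓ : ℚ) * μ / (w i)) ℓ
          = ((fun ℓ : ℕ => (ℓ : ℚ) * μ / (w i)) ∘ τ) ℓ := by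
      intro ℓ hℓ
      rw [Multiset.mem_range] at hℓ
      simp only [Function.comp_apply, hf, hτ]
      by_cases h0 : ℓ = 0
      · subst h0; simp
      · rw [if_neg h0, if_neg (by
          have hl : (0 : ℚ) < (ℓ : ℚ) := by exact_mod_cast Nat.pos_of_ne_zero h0
          positivity)]
        have hc : ((w i - ℓ : ℕ) : ℚ) = (w i : ℚ) - (ℓ : ℚ) := by
          rw [Nat.cast_sub (by omega)]
        rw [hc]
        field_simp
    rw [Multiset.map_congr rfl hcomp, ← Multiset.map_map,
      aux_map_range (w i) τ (by intro k hk; simp only [hτ]; split_ifs <;> omega)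
        (by intro a ha b hb2 h; simp only [hτ] at h; split_ifs at h <;> omega)]
  set r : ℕ → ℚ := fun k => if k ≤ n then 0 else (μ : ℚ) - s (μ + n - k) with hr
  have hMr : (Multiset.range μ).map r = (Multiset.range μ).map s := by
    set σ : ℕ → ℕ := fun k => if k ≤ n then k else μ + n - k with hσ
    have hστ : ∀ k ∈ Multiset.range μ, r k = ((f ∘ s) ∘ σ) k := by
      intro k hk
      rw [Multiset.mem_range] at hk
      simp only [Function.comp_apply, hr, hσ, hf]
      by_cases hkn : k ≤ n
      · rw [if_pos hkn, if_pos hkn, hz k hkn, if_pos rfl]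
      · rw [if_neg hkn, if_neg hkn]
        have hlt : n < μ + n - k := by omega
        have hlt2 : μ + n - k < μ := by omega
        rw [if_neg (ne_of_gt (hpos _ hlt hlt2))]
    rw [Multiset.map_congr rfl hστ, ← Multiset.map_map,
      aux_map_range μ σ (by intro k hk; simp only [hσ]; split_ifs <;> omega)
        (by intro a ha b hb2 h; simp only [hσ] at h; split_ifs at h <;> omega),
      ← Multiset.map_map, hMf]
  -- sorted lists with equal multisets are equal
  have hsr : ∀ k, k < μ → s k = r k := by
    have hsort_s : ((List.range μ).map s).Pairwise (· ≤ ·) := aux_sorted μ s hmono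
    have hsort_r : ((List.range μ).map r).Pairwise (· ≤ ·) := by
      apply aux_sorted
      intro k hk
      simp only [hr]
      by_cases h1 : k + 1 ≤ n
      · rw [if_pos h1, if_pos (by omega)]
      · rw [if_neg h1]
        by_cases h2 : k ≤ n
        · rw [if_pos h2]
          have hlt2 : μ + n - (k + 1) < μ := by omega
          have := (hb (μ + n - (k + 1)) hlt2).2
          linarith
        · rw [if_neg h2]
          have := hmono (μ + n - (k + 1)) (by omega)
          have he : μ + n - (k + 1) + 1 = μ + n - k := by omega
          rw [he] at this
          linarith
    have hperm : ((List.range μ).map r).Perm ((List.range μ).map s) := by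
      exact Quotient.exact hMr
    have hleq : ((List.range μ).map r) = ((List.range μ).map s) :=
      List.Perm.eq_of_pairwise' hsort_r hsort_s hperm
    intro k hk
    have h1 : ((List.range μ).map r)[k]? = some (r k) := by
      simp [List.getElem?_map, List.getElem?_range, hk]
    have h2 : ((List.range μ).map s)[k]? = some (s k) := by
      simp [List.getElem?_map, List.getElem?_range, hk]
    rw [hleq, h2] at h1
    exact Option.some.inj h1
  have hsym : ∀ k, n < k → k < μ → s k + s (μ + n - k) = (μ : ℚ) := by
    intro k hk1 hk2
    have := hsr k hk2
    rw [hr] at this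
    simp only at this
    rw [if_neg (by omega)] at this
    linarith
  refine ⟨?_, ?_, ?_, ?_⟩
  · ext i j
    simp only [Gmat, Matrix.transpose_apply, Matrix.of_apply]
    rw [Nat.add_comm]
  · -- invertibility: G * G = 1
    have hGG : Gmat μ n * Gmat μ n = 1 := by
      ext i j
      rw [Matrix.mul_apply, Matrix.one_apply]
      have hi := i.isLt
      have hj := j.isLt
      by_cases hin : (i : ℕ) ≤ n
      · have hmlt : n - (i : ℕ) < μ := by omega
        rw [Finset.sum_eq_single (⟨n - (i : ℕ), hmlt⟩ : Fin μ)]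
        · simp only [Gmat, Matrix.of_apply, Fin.val_mk]
          rw [if_pos (Or.inl (by omega)), one_mul]
          apply if_congr _ rfl rfl
          rw [Fin.ext_iff]
          omega
        · intro b _ hb2
          have hb3 : (b : ℕ) ≠ n - (i : ℕ) := fun hc => hb2 (Fin.ext hc)
          have hbl := b.isLt
          simp only [Gmat, Matrix.of_apply]
          rw [if_neg (by omega), zero_mul]
        · intro h; exact absurd (Finset.mem_univ _) h
      · have hmlt : μ + n - (i : ℕ) < μ := by omega
        rw [Finset.sum_eq_single (⟨μ + n - (i : ℕ), hmlt⟩ : Fin μ)]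
        · simp only [Gmat, Matrix.of_apply, Fin.val_mk]
          rw [if_pos (Or.inr (by omega)), one_mul]
          apply if_congr _ rfl rfl
          rw [Fin.ext_iff]
          omega
        · intro b _ hb2
          have hb3 : (b : ℕ) ≠ μ + n - (i : ℕ) := fun hc => hb2 (Fin.ext hc)
          have hbl := b.isLt
          simp only [Gmat, Matrix.of_apply]
          rw [if_neg (by omega), zero_mul]
        · intro h; exact absurd (Finset.mem_univ _) h
    have := invertibleOfRightInverse _ _ hGG
    exact isUnit_of_invertible _
  · -- A0 self-adjointness
    have key : ∀ i j : ℕ, i < μ → j < μ → (i + j + 1 = n ∨ i + j + 1 = μ + n) →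
        i + 1 < μ → s (i + 1) = s i → j + 1 < μ ∧ s (j + 1) = s j := by
      intro i j hi hj hsum hi1 hsi
      rcases hsum with h | h
      · refine ⟨by omega, ?_⟩
        rw [hz (j + 1) (by omega), hz j (by omega)]
      · have hin : n < i := by
          by_contra hc
          push_neg at hc
          have hieq : i = n := by omega
          have h1 : s (n + 1) = 0 := by rw [← hieq, hsi, hieq, hz n le_rfl]
          have h2 : 0 < s (n + 1) := hpos (n + 1) (by omega) (by omega)
          rw [h1] at h2; exact lt_irrefl 0 h2
        have hjn : n < j := by omega
        refine ⟨by omega, ?_⟩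
        have e1 := hsym j hjn hj
        have e2 := hsym (j + 1) (by omega) (by omega)
        have r1 : μ + n - j = i + 1 := by omega
        have r2 : μ + n - (j + 1) = i := by omega
        rw [r1] at e1; rw [r2] at e2
        have : s (j + 1) = (μ : ℚ) - s i := by linarith
        rw [this]; linarith [e1, hsi]
    have lhs_eq : ∀ i j : Fin μ, ((A0lim μ s)ᵀ * Gmat μ n) i j
        = if ((i : ℕ) + 1 < μ ∧ s ((i : ℕ) + 1) = s (i : ℕ))
            ∧ ((i : ℕ) + (j : ℕ) + 1 = n ∨ (i : ℕ) + (j : ℕ) + 1 = μ + n) then (μ : ℂ) else 0 := by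
      intro i j
      rw [Matrix.mul_apply]
      by_cases hi1 : (i : ℕ) + 1 < μ
      · rw [Finset.sum_eq_single (⟨(i : ℕ) + 1, hi1⟩ : Fin μ)]
        · simp only [Matrix.transpose_apply, A0lim, Gmat, Matrix.of_apply]
          by_cases hq : s ((i : ℕ) + 1) = s (i : ℕ)
          · simp only [hq, and_true, if_pos rfl, hi1, true_and, if_true]
            by_cases hc : (i : ℕ) + 1 + (j : ℕ) = n ∨ (i : ℕ) + 1 + (j : ℕ) = μ + n
            · rw [if_pos hc, mul_one,
                if_pos (hc.imp (fun h => by omega) (fun h => by omega))]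
            · rw [if_neg hc, mul_zero,
                if_neg (fun hq2 => hc (hq2.imp (fun h => by omega) (fun h => by omega)))]
          · simp only [hq, and_false, if_false, zero_mul]
            rw [if_neg (by tauto)]
        · intro b _ hb2
          simp only [Matrix.transpose_apply, A0lim, Matrix.of_apply]
          have : ¬ ((b : ℕ) = (i : ℕ) + 1 ∧ s ((i : ℕ) + 1) = s (i : ℕ)) := by
            intro hc
            exact hb2 (Fin.ext hc.1)
          rw [if_neg this, zero_mul]
        · intro h; exact absurd (Finset.mem_univ _) h
      · rw [Finset.sum_eq_zero, if_neg (by tauto)]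
        intro b _
        simp only [Matrix.transpose_apply, A0lim, Matrix.of_apply]
        have : ¬ ((b : ℕ) = (i : ℕ) + 1 ∧ s ((i : ℕ) + 1) = s (i : ℕ)) := by
          intro hc
          have := b.isLt
          omega
        rw [if_neg this, zero_mul]
    have rhs_eq : ∀ i j : Fin μ, (Gmat μ n * A0lim μ s) i j
        = if ((j : ℕ) + 1 < μ ∧ s ((j : ℕ) + 1) = s (j : ℕ))
            ∧ ((i : ℕ) + (j : ℕ) + 1 = n ∨ (i : ℕ) + (j : ℕ) + 1 = μ + n) then (μ : ℂ) else 0 := by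
      intro i j
      rw [Matrix.mul_apply]
      by_cases hj1 : (j : ℕ) + 1 < μ
      · rw [Finset.sum_eq_single (⟨(j : ℕ) + 1, hj1⟩ : Fin μ)]
        · simp only [A0lim, Gmat, Matrix.of_apply]
          by_cases hq : s ((j : ℕ) + 1) = s (j : ℕ)
          · simp only [hq, and_true, if_pos rfl, hj1, true_and, if_true]
            by_cases hc : (i : ℕ) + ((j : ℕ) + 1) = n ∨ (i : ℕ) + ((j : ℕ) + 1) = μ + n
            · rw [if_pos hc, one_mul,
                if_pos (hc.imp (fun h => by omega) (fun h => by omega))]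
            · rw [if_neg hc, zero_mul,
                if_neg (fun hq2 => hc (hq2.imp (fun h => by omega) (fun h => by omega)))]
          · simp only [hq, and_false, if_false, mul_zero]
            rw [if_neg (by tauto)]
        · intro b _ hb2
          simp only [A0lim, Matrix.of_apply]
          have : ¬ ((b : ℕ) = (j : ℕ) + 1 ∧ s ((j : ℕ) + 1) = s (j : ℕ)) := by
            intro hc
            exact hb2 (Fin.ext hc.1)
          rw [if_neg this, mul_zero]
        · intro h; exact absurd (Finset.mem_univ _) h
      · rw [Finset.sum_eq_zero, if_neg (by tauto)]
        intro b _
        simp only [A0lim, Matrix.of_apply]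
        have : ¬ ((b : ℕ) = (j : ℕ) + 1 ∧ s ((j : ℕ) + 1) = s (j : ℕ)) := by
          intro hc
          have := b.isLt
          omega
        rw [if_neg this, mul_zero]
    ext i j
    rw [lhs_eq i j, rhs_eq i j]
    apply if_congr _ rfl rfl
    constructor
    · rintro ⟨⟨h1, h2⟩, h3⟩
      have := key (i : ℕ) (j : ℕ) i.isLt j.isLt h3 h1 h2
      exact ⟨this, h3⟩
    · rintro ⟨⟨h1, h2⟩, h3⟩
      have := key (j : ℕ) (i : ℕ) j.isLt i.isLt
        (h3.imp (fun h => by omega) (fun h => by omega)) h1 h2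
      exact ⟨this, h3⟩
  · -- Ainf condition
    ext i j
    rw [Matrix.add_apply, Matrix.smul_apply]
    have hAt : (Ainf μ s)ᵀ = Ainf μ s := Matrix.diagonal_transpose _
    rw [hAt]
    simp only [Ainf, Matrix.diagonal_mul, Matrix.mul_diagonal]
    simp only [Gmat, Matrix.of_apply]
    by_cases hc : (i : ℕ) + (j : ℕ) = n ∨ (i : ℕ) + (j : ℕ) = μ + n
    · simp only [if_pos hc, mul_one, one_mul, smul_eq_mul]
      have hi := i.isLt
      have hj := j.isLt
      rcases hc with h | h
      · rw [hz (i : ℕ) (by omega), hz (j : ℕ) (by omega)]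
        push_cast
        have : ((i : ℕ) : ℂ) + ((j : ℕ) : ℂ) = (n : ℂ) := by
          rw [← Nat.cast_add, h]
        linear_combination this
      · have hin : n < (i : ℕ) := by omega
        have hs := hsym (i : ℕ) hin hi
        have : μ + n - (i : ℕ) = (j : ℕ) := by omega
        rw [this] at hs
        have hcast : ((s (i : ℕ) : ℚ) : ℂ) + ((s (j : ℕ) : ℚ) : ℂ) = (μ : ℂ) := by
          rw [← Rat.cast_add, hs]
          push_cast
          ring
        have hsum : ((i : ℕ) : ℂ) + ((j : ℕ) : ℂ) = (μ : ℂ) + (n : ℂ) := by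
          rw [← Nat.cast_add, h]
          push_cast
          ring
        linear_combination hsum - hcast
    · simp only [if_neg hc, mul_zero, zero_mul, add_zero, smul_zero]
end
end

section
/- If μ ≥ n+2 then the matrix Ā_0^φ is not self-adjoint with respect to G, i.e. (Ā_0^φ)ᵀ G ≠ G Ā_0^φ; explicitly, (G Ā_0^φ)_{n,μ−1}-type entries fail: G applied to (Ā_0^φ e_n, e_{μ−1}) equals μ while G applied to (e_n, Ā_0^φ e_{μ−1}) equals 0. If μ = n+1 then Ā_0^φ = [A_0] and (Ā_0^φ)ᵀ G = G Ā_0^φ. (Hence the non-graded limit tuple is a Frobenius type structure if and only if μ = n+1.) -/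
open Finset Matrix

noncomputable section

/-- The matrix `Ā_0^φ`: `(Ā_0^φ)_{k+1,k} = μ` for `0 ≤ k ≤ μ−2`, all other entries `0`. -/
def A0phibar (μ : ℕ) : Matrix (Fin μ) (Fin μ) ℂ :=
  Matrix.of fun i j => if (i : ℕ) = (j : ℕ) + 1 then (μ : ℂ) else 0

lemma tG (μ n : ℕ) (i j : Fin μ) :
    ((A0phibar μ)ᵀ * Gmat μ n) i j =
    if (i:ℕ)+1 < μ ∧ ((i:ℕ)+1+(j:ℕ) = n ∨ (i:ℕ)+1+(j:ℕ) = μ+n) then (μ:ℂ) else 0 := by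
  rw [Matrix.mul_apply]
  by_cases h : (i:ℕ)+1 < μ
  · rw [Finset.sum_eq_single (⟨(i:ℕ)+1, h⟩ : Fin μ)]
    · simp only [A0phibar, Gmat, Matrix.transpose_apply, Matrix.of_apply]
      split_ifs <;> simp_all
    · intro b _ hb
      simp only [A0phibar, Matrix.transpose_apply, Matrix.of_apply]
      rw [if_neg fun hbe => hb (Fin.ext hbe), zero_mul]
    · simp
  · rw [if_neg fun hcc => h hcc.1, Finset.sum_eq_zero]
    intro k _
    simp only [A0phibar, Matrix.transpose_apply, Matrix.of_apply]
    rw [if_neg (by omega), zero_mul]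

lemma Gt (μ n : ℕ) (i j : Fin μ) :
    (Gmat μ n * A0phibar μ) i j =
    if (j:ℕ)+1 < μ ∧ ((i:ℕ)+((j:ℕ)+1) = n ∨ (i:ℕ)+((j:ℕ)+1) = μ+n) then (μ:ℂ) else 0 := by
  rw [Matrix.mul_apply]
  by_cases h : (j:ℕ)+1 < μ
  · rw [Finset.sum_eq_single (⟨(j:ℕ)+1, h⟩ : Fin μ)]
    · simp only [A0phibar, Gmat, Matrix.of_apply]
      split_ifs <;> simp_all
    · intro b _ hb
      simp only [A0phibar, Matrix.of_apply]
      rw [if_neg fun hbe => hb (Fin.ext hbe), mul_zero]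
    · simp
  · rw [if_neg fun hcc => h hcc.1, Finset.sum_eq_zero]
    intro k _
    simp only [A0phibar, Matrix.of_apply]
    rw [if_neg (by omega), mul_zero]

/-- if `μ ≥ n+2` then `Ā_0^φ` is not `G`-self-adjoint; explicitly
`G(Ā_0^φ e_n, e_{μ−1}) = μ` while `G(e_n, Ā_0^φ e_{μ−1}) = 0`. If `μ = n+1` then
`Ā_0^φ = [A_0]` and `Ā_0^φ` is `G`-self-adjoint. -/
theorem stmt_11 (n : ℕ) (hn : 1 ≤ n) (w : ℕ → ℕ) (hw0 : w 0 = 1)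
    (hwpos : ∀ i ∈ Finset.Icc 1 n, 1 ≤ w i)
    (μ : ℕ) (hμ : μ = 1 + ∑ i ∈ Finset.Icc 1 n, w i)
    (s : ℕ → ℚ) (hmono : ∀ k, k + 1 < μ → s k ≤ s (k + 1))
    (hmult : (Multiset.range μ).map s =
      (Finset.range (n + 1)).val.bind fun i =>
        (Multiset.range (w i)).map fun ℓ => (ℓ : ℚ) * μ / (w i)) :
    (∀ h : n + 2 ≤ μ,
      ((A0phibar μ)ᵀ * Gmat μ n) ⟨n, by omega⟩ ⟨μ - 1, by omega⟩ = (μ : ℂ) ∧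
      (Gmat μ n * A0phibar μ) ⟨n, by omega⟩ ⟨μ - 1, by omega⟩ = 0 ∧
      (A0phibar μ)ᵀ * Gmat μ n ≠ Gmat μ n * A0phibar μ) ∧
    (μ = n + 1 →
      A0phibar μ = A0lim μ s ∧
      (A0phibar μ)ᵀ * Gmat μ n = Gmat μ n * A0phibar μ) := by
  constructor
  · intro h
    have e1 : ((A0phibar μ)ᵀ * Gmat μ n) ⟨n, by omega⟩ ⟨μ - 1, by omega⟩ = (μ : ℂ) := by
      rw [tG, if_pos]
      exact ⟨by simp; omega, Or.inr (by simp; omega)⟩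
    have e2 : (Gmat μ n * A0phibar μ) ⟨n, by omega⟩ ⟨μ - 1, by omega⟩ = 0 := by
      rw [Gt, if_neg]
      rintro ⟨h1, -⟩
      simp at h1
      omega
    refine ⟨e1, e2, fun heq => ?_⟩
    have := congrFun (congrFun heq ⟨n, by omega⟩) ⟨μ - 1, by omega⟩
    rw [e1, e2] at this
    exact Nat.cast_ne_zero.mpr (by omega : μ ≠ 0) this
  · intro hμn
    have hall : ∀ i ∈ Finset.Icc 1 n, w i = 1 := by
      intro i hi
      by_contra hne
      have hlt : ∑ j ∈ Finset.Icc 1 n, (1:ℕ) < ∑ j ∈ Finset.Icc 1 n, w j :=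
        Finset.sum_lt_sum hwpos ⟨i, hi, by have := hwpos i hi; omega⟩
      simp [Nat.card_Icc] at hlt
      omega
    have hs : ∀ k, k < μ → s k = 0 := by
      intro k hk
      have hmem : s k ∈ (Multiset.range μ).map s :=
        Multiset.mem_map.mpr ⟨k, Multiset.mem_range.mpr hk, rfl⟩
      rw [hmult] at hmem
      obtain ⟨i, hi, hmem2⟩ := Multiset.mem_bind.mp hmem
      obtain ⟨ℓ, hℓ, hval⟩ := Multiset.mem_map.mp hmem2
      have hin : i < n + 1 := by
        rw [Finset.mem_val] at hi; exact Finset.mem_range.mp hi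
      have hwi : w i = 1 := by
        rcases Nat.eq_zero_or_pos i with h0 | h0
        · rw [h0, hw0]
        · exact hall i (Finset.mem_Icc.mpr ⟨h0, by omega⟩)
      rw [hwi] at hℓ
      simp [Multiset.range_succ] at hℓ
      rw [← hval, hℓ]
      simp
    constructor
    · ext i j
      simp only [A0phibar, A0lim, Matrix.of_apply]
      by_cases hij : (i:ℕ) = (j:ℕ)+1
      · have hj1 : (j:ℕ)+1 < μ := hij ▸ i.isLt
        have hsj : s ((j:ℕ)+1) = s (j:ℕ) := by rw [hs _ hj1, hs _ (by omega)]
        rw [if_pos hij, if_pos ⟨hij, hsj⟩]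
      · rw [if_neg hij, if_neg fun hh => hij hh.1]
    · ext i j
      rw [tG, Gt]
      have hi := i.isLt; have hj := j.isLt
      by_cases hc : (i:ℕ)+1+(j:ℕ) = n
      · rw [if_pos ⟨by omega, Or.inl hc⟩, if_pos ⟨by omega, Or.inl (by omega)⟩]
      · rw [if_neg, if_neg]
        · rintro ⟨h1, h2 | h2⟩ <;> omega
        · rintro ⟨h1, h2 | h2⟩ <;> omega
end
end

section
/- Let e_0 be the first standard basis vector of ℂ^μ. Then: (1) e_0 is an eigenvector of A_∞ (with eigenvalue 0); (2) the family (e_0, [A_0]e_0, …, [A_0]^{μ−1}e_0) is a basis of ℂ^μ if and only if μ = n+1; and (3) if μ ≥ n+2, then for every vector v ∈ ℂ^μ the family (v, [A_0]v, …, [A_0]^{μ−1}v) is not a basis of ℂ^μ (the matrix [A_0] has no cyclic vector, because it has at least two Jordan blocks for the eigenvalue 0). -/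
open Finset Matrix

noncomputable section

/-- The first standard basis vector `e_0` of `ℂ^μ`. -/
def e0vec (μ : ℕ) : Fin μ → ℂ := fun j => if (j : ℕ) = 0 then 1 else 0

lemma A0_pow_support (μ : ℕ) (s : ℕ → ℚ) (v : Fin μ → ℂ) :
    ∀ (m : ℕ) (i : Fin μ), ((A0lim μ s ^ m).mulVec v) i ≠ 0 →
      m ≤ (i : ℕ) ∧ ∀ t, (i : ℕ) - m ≤ t → t < (i : ℕ) → s (t + 1) = s t := by
  intro m
  induction m with
  | zero => intro i _; exact ⟨Nat.zero_le _, fun t ht ht' => absurd (lt_of_le_of_lt ht ht') (by omega)⟩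
  | succ m ih =>
    intro i h
    rw [pow_succ', ← Matrix.mulVec_mulVec] at h
    rw [Matrix.mulVec, dotProduct] at h
    obtain ⟨j, -, hj⟩ := Finset.exists_ne_zero_of_sum_ne_zero h
    have h1 : A0lim μ s i j ≠ 0 := fun hz => hj (by rw [hz, zero_mul])
    have h2 : ((A0lim μ s ^ m).mulVec v) j ≠ 0 := fun hz => hj (by rw [hz, mul_zero])
    have hcond : (i : ℕ) = (j : ℕ) + 1 ∧ s ((j : ℕ) + 1) = s (j : ℕ) := by
      by_contra hc
      exact h1 (by simp [A0lim, hc])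
    obtain ⟨hm, hall⟩ := ih j h2
    refine ⟨by omega, fun t ht ht' => ?_⟩
    rcases lt_or_eq_of_le (by omega : t ≤ (j : ℕ)) with h' | h'
    · exact hall t (by omega) h'
    · rw [h']; exact hcond.2

lemma A0_pow_e0 (μ : ℕ) (s : ℕ → ℚ) (hconst : ∀ k, k + 1 < μ → s (k + 1) = s k) :
    ∀ m, m < μ → (A0lim μ s ^ m).mulVec (e0vec μ) =
      fun i : Fin μ => if (i : ℕ) = m then (μ : ℂ) ^ m else 0 := by
  intro m
  induction m with
  | zero => intro _; simp only [pow_zero, Matrix.one_mulVec]; rfl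
  | succ m ih =>
    intro hm
    have hm' : m < μ := by omega
    rw [pow_succ', ← Matrix.mulVec_mulVec, ih hm']
    funext i
    rw [Matrix.mulVec, dotProduct]
    rw [Finset.sum_eq_single (⟨m, hm'⟩ : Fin μ)]
    · have : s (m + 1) = s m := hconst m hm
      simp only [A0lim, Matrix.of_apply, this, and_true]
      by_cases hi : (i : ℕ) = m + 1 <;> simp [hi, pow_succ] <;> ring
    · intro j _ hj
      have : (j : ℕ) ≠ m := fun h => hj (Fin.ext h)
      simp [this]
    · intro h; exact absurd (Finset.mem_univ _) h

lemma s_zero_iff (n : ℕ) (w : ℕ → ℕ) (hwp : ∀ i, i < n + 1 → 1 ≤ w i)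
    (μ : ℕ) (hμpos : 0 < μ)
    (s : ℕ → ℚ) (hmono : ∀ k, k + 1 < μ → s k ≤ s (k + 1))
    (hmult : (Multiset.range μ).map s =
      (Finset.range (n + 1)).val.bind fun i =>
        (Multiset.range (w i)).map fun ℓ => (ℓ : ℚ) * μ / (w i)) :
    ∀ k, k < μ → (s k = 0 ↔ k ≤ n) := by
  simp only [bind_pure_comp, Multiset.fmap_def, Multiset.map_map] at hmult
  -- full monotonicity
  have smono : ∀ j k, j ≤ k → k < μ → s j ≤ s k := by
    intro j k hjk hk
    induction k with
    | zero => simp_all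
    | succ k ih =>
      rcases Nat.lt_or_ge j (k + 1) with h | h
      · exact le_trans (ih (by omega) (by omega)) (hmono k hk)
      · have : j = k + 1 := by omega
        simp [this]
  -- nonnegativity
  have snonneg : ∀ k, k < μ → 0 ≤ s k := by
    intro k hk
    have hmem : s k ∈ (Multiset.range μ).map s :=
      Multiset.mem_map.2 ⟨k, Multiset.mem_range.2 hk, rfl⟩
    rw [hmult] at hmem
    obtain ⟨i, -, hi⟩ := Multiset.mem_bind.1 hmem
    obtain ⟨ℓ, -, hℓ⟩ := Multiset.mem_map.1 hi
    rw [← hℓ]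
    simp only [Function.comp_apply]
    positivity
  -- counting zeros
  classical
  have hcount := congrArg (Multiset.count (0 : ℚ)) hmult
  rw [Multiset.count_map, Multiset.count_bind] at hcount
  have hR : ∀ i ∈ Finset.range (n + 1),
      Multiset.count (0 : ℚ) ((Multiset.range (w i)).map
        ((fun x => x * (μ : ℚ) / (w i)) ∘ Nat.cast)) = 1 := by
    intro i hi
    rw [Finset.mem_range] at hi
    rw [Multiset.count_map]
    have hfil : (Multiset.range (w i)).filter
        (fun ℓ => (0:ℚ) = ((fun x => x * (μ : ℚ) / (w i)) ∘ Nat.cast) ℓ)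
        = (Multiset.range (w i)).filter (fun ℓ => ℓ = 0) := by
      apply Multiset.filter_congr
      intro ℓ _
      simp only [Function.comp_apply]
      have hw : ((w i : ℚ)) ≠ 0 := by
        have := hwp i hi; positivity
      have hμ : ((μ : ℚ)) ≠ 0 := by positivity
      constructor
      · intro h
        have h' := h.symm
        rw [div_eq_zero_iff, mul_eq_zero] at h'
        rcases h' with (h | h) | h
        · exact_mod_cast h
        · exact absurd h hμ
        · exact absurd h hw
      · intro h; subst h; simp
    rw [hfil, ← Finset.range_val, ← Finset.filter_val, Finset.filter_eq',
      if_pos (Finset.mem_range.2 (hwp i hi))]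
    rfl
  rw [show ((Finset.range (n+1)).val.map fun b => Multiset.count (0:ℚ)
      ((Multiset.range (w b)).map ((fun x => x * (μ : ℚ) / (w b)) ∘ Nat.cast))).sum
      = ∑ i ∈ Finset.range (n+1), Multiset.count (0:ℚ)
        ((Multiset.range (w i)).map ((fun x => x * (μ : ℚ) / (w i)) ∘ Nat.cast)) from rfl,
    Finset.sum_congr rfl hR, Finset.sum_const, smul_eq_mul, mul_one,
    Finset.card_range] at hcount
  -- hcount : card of zero set = n + 1
  set Z := (Finset.range μ).filter (fun k => (0:ℚ) = s k) with hZ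
  have hZcard : Z.card = n + 1 := by
    rw [hZ, Finset.card_def, Finset.filter_val, Finset.range_val]
    exact hcount
  have hdown : ∀ j k, j ≤ k → k ∈ Z → j ∈ Z := by
    intro j k hjk hk
    rw [hZ, Finset.mem_filter, Finset.mem_range] at hk ⊢
    refine ⟨by omega, ?_⟩
    have h1 := snonneg j (by omega)
    have h2 := smono j k hjk hk.1
    rw [← hk.2] at h2
    linarith
  have hmemZ : ∀ k, k ∈ Z ↔ k ≤ n := by
    intro k
    constructor
    · intro hk
      by_contra hkn
      have hsub : Finset.range (k + 1) ⊆ Z := fun j hj =>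
        hdown j k (by simpa using Nat.lt_succ_iff.1 (Finset.mem_range.1 hj)) hk
      have := Finset.card_le_card hsub
      rw [Finset.card_range, hZcard] at this
      omega
    · intro hk
      by_contra hkZ
      have hsub : Z ⊆ Finset.range k := by
        intro m hm
        rw [Finset.mem_range]
        by_contra hmk
        exact hkZ (hdown k m (by omega) hm)
      have := Finset.card_le_card hsub
      rw [Finset.card_range, hZcard] at this
      omega
  intro k hk
  rw [← hmemZ k, hZ, Finset.mem_filter, Finset.mem_range, eq_comm]
  tauto

/-- `e_0` is an eigenvector of `A_∞` with eigenvalue `0`; the family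
`(e_0, [A_0]e_0, …, [A_0]^{μ−1}e_0)` is a basis of `ℂ^μ` iff `μ = n+1`; and if
`μ ≥ n+2` then no vector `v` yields a basis `(v, [A_0]v, …, [A_0]^{μ−1}v)`. -/
theorem stmt_12 (n : ℕ) (hn : 1 ≤ n) (w : ℕ → ℕ) (hw0 : w 0 = 1)
    (hwpos : ∀ i ∈ Finset.Icc 1 n, 1 ≤ w i)
    (μ : ℕ) (hμ : μ = 1 + ∑ i ∈ Finset.Icc 1 n, w i)
    (s : ℕ → ℚ) (hmono : ∀ k, k + 1 < μ → s k ≤ s (k + 1))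
    (hmult : (Multiset.range μ).map s =
      (Finset.range (n + 1)).val.bind fun i =>
        (Multiset.range (w i)).map fun ℓ => (ℓ : ℚ) * μ / (w i)) :
    (Ainf μ s).mulVec (e0vec μ) = (0 : ℂ) • e0vec μ ∧
    ((LinearIndependent ℂ (fun k : Fin μ => (A0lim μ s ^ (k : ℕ)).mulVec (e0vec μ)) ∧
      Submodule.span ℂ
        (Set.range fun k : Fin μ => (A0lim μ s ^ (k : ℕ)).mulVec (e0vec μ)) = ⊤)
      ↔ μ = n + 1) ∧
    (n + 2 ≤ μ → ∀ v : Fin μ → ℂ,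
      ¬(LinearIndependent ℂ (fun k : Fin μ => (A0lim μ s ^ (k : ℕ)).mulVec v) ∧
        Submodule.span ℂ
          (Set.range fun k : Fin μ => (A0lim μ s ^ (k : ℕ)).mulVec v) = ⊤)) := by
  have hwp : ∀ i, i < n + 1 → 1 ≤ w i := by
    intro i hi
    rcases Nat.eq_zero_or_pos i with h | h
    · simp [h, hw0]
    · exact hwpos i (Finset.mem_Icc.2 ⟨h, by omega⟩)
  have hμge : n + 1 ≤ μ := by
    have h1 : ∑ _i ∈ Finset.Icc 1 n, 1 ≤ ∑ i ∈ Finset.Icc 1 n, w i :=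
      Finset.sum_le_sum hwpos
    rw [Finset.sum_const, smul_eq_mul, mul_one, Nat.card_Icc] at h1
    omega
  have hμpos : 0 < μ := by omega
  have hsz := s_zero_iff n w hwp μ hμpos s hmono hmult
  have part1 : (Ainf μ s).mulVec (e0vec μ) = (0 : ℂ) • e0vec μ := by
    funext i
    rw [Ainf, Matrix.mulVec_diagonal]
    by_cases hi : (i : ℕ) = 0
    · have h0 : s (i : ℕ) = 0 := (hsz _ i.isLt).2 (by omega)
      rw [hi] at h0
      simp [e0vec, hi, h0]
    · simp [e0vec, hi]
  have part3 : n + 2 ≤ μ → ∀ v : Fin μ → ℂ,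
      ¬(LinearIndependent ℂ (fun k : Fin μ => (A0lim μ s ^ (k : ℕ)).mulVec v) ∧
        Submodule.span ℂ
          (Set.range fun k : Fin μ => (A0lim μ s ^ (k : ℕ)).mulVec v) = ⊤) := by
    intro hμ2 v hv
    have hzero : (A0lim μ s ^ (μ - 1)).mulVec v = 0 := by
      funext i
      by_contra hne
      obtain ⟨h1, h2⟩ := A0_pow_support μ s v (μ - 1) i hne
      have hilt := i.isLt
      have heq := h2 n (by omega) (by omega)
      have hn0 : s n = 0 := (hsz n (by omega)).2 le_rfl
      have hn1 : s (n + 1) ≠ 0 := fun h => by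
        have := (hsz (n + 1) (by omega)).1 h; omega
      exact hn1 (by rw [heq, hn0])
    have hne := hv.1.ne_zero ⟨μ - 1, by omega⟩
    exact hne hzero
  refine ⟨part1, ⟨?_, ?_⟩, part3⟩
  · rintro ⟨hli, hsp⟩
    by_contra hne
    exact part3 (by omega) (e0vec μ) ⟨hli, hsp⟩
  · intro hμn
    subst hμn
    have hconst : ∀ k, k + 1 < n + 1 → s (k + 1) = s k := by
      intro k hk
      rw [(hsz (k + 1) hk).2 (by omega), (hsz k (by omega)).2 (by omega)]
    have hμ0 : ((n + 1 : ℕ) : ℂ) ≠ 0 := by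
      exact_mod_cast Nat.succ_ne_zero n
    set B := (Pi.basisFun ℂ (Fin (n + 1))).unitsSMul
      (fun k : Fin (n + 1) =>
        Units.mk0 (((n + 1 : ℕ) : ℂ) ^ (k : ℕ)) (pow_ne_zero _ hμ0)) with hB
    have hfam : (fun k : Fin (n + 1) =>
        (A0lim (n + 1) s ^ (k : ℕ)).mulVec (e0vec (n + 1))) = ⇑B := by
      funext k
      rw [A0_pow_e0 (n + 1) s hconst (k : ℕ) k.isLt, hB, Module.Basis.unitsSMul_apply,
        Pi.basisFun_apply]
      funext i
      simp only [Units.smul_def, Units.val_mk0, Pi.smul_apply, Pi.single_apply,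
        smul_eq_mul, Fin.ext_iff]
      by_cases h : (i : ℕ) = (k : ℕ) <;> simp [h, eq_comm]
    rw [hfam]
    exact ⟨B.linearIndependent, B.span_eq⟩
end
end

section
/- For every nonzero complex number x: the matrix 𝒢^φ(x) is symmetric and invertible; A_0^φ(x)ᵀ 𝒢^φ(x) = 𝒢^φ(x) A_0^φ(x); A_∞ᵀ 𝒢^φ(x) + 𝒢^φ(x) A_∞ = n·𝒢^φ(x); and x·(d/dx)𝒢^φ(x) = (R^φ)ᵀ 𝒢^φ(x) + 𝒢^φ(x) R^φ. -/
open Finset Matrix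

noncomputable section

/-- The matrix `A_0^φ(x)`: `(A_0^φ(x))_{k+1,k} = μ` for `0 ≤ k ≤ μ−2`,
`(A_0^φ(x))_{0,μ−1} = μx`, all other entries `0`. -/
def A0phi (μ : ℕ) (x : ℂ) : Matrix (Fin μ) (Fin μ) ℂ :=
  Matrix.of fun i j =>
    if (i : ℕ) = (j : ℕ) + 1 then (μ : ℂ)
    else if (i : ℕ) = 0 ∧ (j : ℕ) = μ - 1 then (μ : ℂ) * x else 0

/-- The diagonal matrix `R^φ`: `(R^φ)_{k,k} = 0` for `0 ≤ k ≤ n`, and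
`(R^φ)_{k,k} = s_k/μ` for `n+1 ≤ k ≤ μ−1`. -/
def Rphi (μ n : ℕ) (s : ℕ → ℚ) : Matrix (Fin μ) (Fin μ) ℂ :=
  Matrix.diagonal fun k : Fin μ =>
    if (k : ℕ) ≤ n then 0 else ((s (k : ℕ) : ℚ) : ℂ) / (μ : ℂ)

/-- The symmetric matrix `𝒢^φ(x)`: `𝒢^φ(x)_{k,n−k} = 1` for `0 ≤ k ≤ n`,
`𝒢^φ(x)_{k,μ+n−k} = x` for `n+1 ≤ k ≤ μ−1`, all other entries `0`. -/
def Gphi (μ n : ℕ) (x : ℂ) : Matrix (Fin μ) (Fin μ) ℂ :=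
  Matrix.of fun i j =>
    if (i : ℕ) + (j : ℕ) = n then 1
    else if (i : ℕ) + (j : ℕ) = μ + n then x else 0

lemma mrange_succ' (m : ℕ) :
    Multiset.range (m + 1) = 0 ::ₘ (Multiset.range m).map (· + 1) := by
  have h : List.range (m + 1) = List.range (1 + m) := by rw [Nat.add_comm]
  rw [Multiset.range, h, List.range_add]
  show ((0 : ℕ) ::ₘ Multiset.map (fun x => 1 + x) (Multiset.range m)) = _
  congr 1
  apply Multiset.map_congr rfl
  intros; omega

lemma msrev (m : ℕ) :
    (Multiset.range m).map (fun k => m - 1 - k) = Multiset.range m := by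
  induction m with
  | zero => simp
  | succ m ih =>
    conv_lhs => rw [Multiset.range_succ]
    simp only [Multiset.map_cons]
    have h1 : (Multiset.range m).map (fun k => m + 1 - 1 - k)
        = ((Multiset.range m).map (fun k => m - 1 - k)).map (· + 1) := by
      rw [Multiset.map_map]
      apply Multiset.map_congr rfl
      intro k hk
      rw [Multiset.mem_range] at hk
      simp only [Function.comp]
      omega
    rw [h1, ih, show m + 1 - 1 - m = 0 by omega, ← mrange_succ']

lemma msrefl (w : ℕ) :
    (Multiset.range w).map (fun ℓ => w - ℓ) = (Multiset.range w).map (· + 1) := by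
  induction w with
  | zero => simp
  | succ w ih =>
    conv_lhs => rw [mrange_succ']
    simp only [Multiset.map_cons, Multiset.map_map]
    have h1 : (Multiset.range w).map ((fun ℓ => w + 1 - ℓ) ∘ (· + 1))
        = (Multiset.range w).map (fun ℓ => w - ℓ) := by
      apply Multiset.map_congr rfl; intro k hk; simp [Function.comp]
    rw [h1, ih]
    conv_rhs => rw [Multiset.range_succ]
    simp only [Multiset.map_cons, Multiset.map_map]
    rw [show w + 1 - 0 = w + 1 from rfl]

lemma mrange_add (a b : ℕ) :
    Multiset.range (a + b) = Multiset.range a + (Multiset.range b).map (a + ·) := by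
  rw [Multiset.range, List.range_add]
  rfl

lemma block_refl (μ W : ℕ) (hW : 1 ≤ W) :
    ((Multiset.range W).map (fun ℓ : ℕ => (ℓ : ℚ) * μ / W)).map (fun q => (μ : ℚ) - q) + {0}
      = (Multiset.range W).map (fun ℓ : ℕ => (ℓ : ℚ) * μ / W) + {(μ : ℚ)} := by
  have hW0 : (W : ℚ) ≠ 0 := by positivity
  have h1 : ((Multiset.range W).map (fun ℓ : ℕ => (ℓ : ℚ) * μ / W)).map (fun q => (μ : ℚ) - q)
      = ((Multiset.range W).map (fun ℓ => W - ℓ)).map (fun ℓ : ℕ => (ℓ : ℚ) * μ / W) := by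
    rw [Multiset.map_map, Multiset.map_map]
    apply Multiset.map_congr rfl
    intro ℓ hℓ
    rw [Multiset.mem_range] at hℓ
    simp only [Function.comp]
    have : ((W - ℓ : ℕ) : ℚ) = (W : ℚ) - ℓ := by
      push_cast [Nat.cast_sub hℓ.le]; ring
    rw [this]
    field_simp
  rw [h1, msrefl, Multiset.map_map]
  have h2 : ({(0 : ℚ)} : Multiset ℚ)
      = Multiset.map (fun ℓ : ℕ => (ℓ : ℚ) * μ / W) {0} := by simp
  have h3 : ({(μ : ℚ)} : Multiset ℚ)
      = Multiset.map (fun ℓ : ℕ => (ℓ : ℚ) * μ / W) {W} := by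
    simp
    field_simp
  rw [h2, h3, ← Multiset.map_map, ← Multiset.map_add, ← Multiset.map_add]
  congr 1
  rw [add_comm _ ({0} : Multiset ℕ), Multiset.singleton_add,
    add_comm _ ({W} : Multiset ℕ), Multiset.singleton_add, ← mrange_succ',
    ← Multiset.range_succ]

lemma key (n : ℕ) (w : ℕ → ℕ) (hw0 : w 0 = 1)
    (hwpos : ∀ i ∈ Finset.Icc 1 n, 1 ≤ w i)
    (μ : ℕ) (hμ : μ = 1 + ∑ i ∈ Finset.Icc 1 n, w i)
    (s : ℕ → ℚ) (hmono : ∀ k, k + 1 < μ → s k ≤ s (k + 1))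
    (hmult : (Multiset.range μ).map s =
      (Finset.range (n + 1)).val.bind fun i =>
        (Multiset.range (w i)).map fun ℓ => (ℓ : ℚ) * μ / (w i)) :
    n + 1 ≤ μ ∧ (∀ k, k ≤ n → s k = 0) ∧
      (∀ i, n + 1 ≤ i → i < μ → s i + s (μ + n - i) = μ) := by
  have hw : ∀ i, i ≤ n → 1 ≤ w i := by
    intro i hi
    rcases Nat.eq_zero_or_pos i with h | h
    · simp [h, hw0]
    · exact hwpos i (Finset.mem_Icc.mpr ⟨h, hi⟩)
  have hμn : n + 1 ≤ μ := by
    have h1 : n ≤ ∑ i ∈ Finset.Icc 1 n, w i := by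
      simpa [Nat.card_Icc] using Finset.card_nsmul_le_sum (Finset.Icc 1 n) w 1 hwpos
    omega
  have hμ0 : 0 < μ := by omega
  have hmult' : (Multiset.range μ).map s =
      (Finset.range (n + 1)).val.bind fun i =>
        (Multiset.range (w i)).map (fun ℓ : ℕ => (ℓ : ℚ) * μ / (w i)) := by
    rw [hmult]
    simp only [Multiset.pure_def, Multiset.bind_def, Multiset.bind_singleton,
      Multiset.map_map, Function.comp_apply]
  have smono' : ∀ d a, a + d < μ → s a ≤ s (a + d) := by
    intro d
    induction d with
    | zero => intro a _; exact le_refl _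
    | succ d ih =>
      intro a h
      exact le_trans (ih a (by omega)) (hmono (a + d) (by omega))
  have smono : ∀ a b, a ≤ b → b < μ → s a ≤ s b := by
    intro a b hab hb
    obtain ⟨d, rfl⟩ := Nat.exists_eq_add_of_le hab
    exact smono' d a hb
  have sbound : ∀ k, k < μ → 0 ≤ s k ∧ s k ≤ μ := by
    intro k hk
    have hmem : s k ∈ (Multiset.range μ).map s :=
      Multiset.mem_map_of_mem s (Multiset.mem_range.mpr hk)
    rw [hmult', Multiset.mem_bind] at hmem
    obtain ⟨i, hi, hmem⟩ := hmem
    rw [Multiset.mem_map] at hmem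
    obtain ⟨ℓ, hℓ, hval⟩ := hmem
    rw [Multiset.mem_range] at hℓ
    have hin : i ≤ n := by
      have := hi
      rw [Finset.mem_val, Finset.mem_range] at this
      omega
    have hwi : (0 : ℚ) < w i := by
      have := hw i hin; positivity
    constructor
    · rw [← hval]; positivity
    · rw [← hval, div_le_iff₀ hwi]
      have h1 : (ℓ : ℚ) ≤ (w i : ℚ) := by exact_mod_cast hℓ.le
      have h2 : (0 : ℚ) ≤ (μ : ℚ) := by positivity
      nlinarith
  have s0 : ∀ k, k ≤ n → s k = 0 := by
    have hcnt : (n + 1 : ℕ) ≤ Multiset.count 0 ((Multiset.range μ).map s) := by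
      rw [hmult', Multiset.count_bind]
      have h1 : ∀ c ∈ (Multiset.map
          (fun i => Multiset.count 0 ((Multiset.range (w i)).map
            (fun ℓ : ℕ => (ℓ : ℚ) * μ / (w i)))) (Finset.range (n + 1)).val),
          1 ≤ c := by
        intro c hc
        rw [Multiset.mem_map] at hc
        obtain ⟨i, hi, rfl⟩ := hc
        rw [Finset.mem_val, Finset.mem_range] at hi
        rw [Multiset.one_le_count_iff_mem, Multiset.mem_map]
        exact ⟨0, Multiset.mem_range.mpr (hw i (by omega)), by simp⟩
      have h2 := Multiset.card_nsmul_le_sum h1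
      simpa using h2
    rw [Multiset.count_map] at hcnt
    have hex : ∃ k, n ≤ k ∧ k < μ ∧ s k = 0 := by
      by_contra hcon
      push_neg at hcon
      have hsub : (Multiset.range μ).filter (fun a => 0 = s a) ≤ Multiset.range n := by
        rw [Multiset.le_iff_subset (Multiset.Nodup.filter _ (Multiset.nodup_range μ))]
        intro k hk
        rw [Multiset.mem_filter, Multiset.mem_range] at hk
        rw [Multiset.mem_range]
        by_contra hkn
        exact hcon k (by omega) hk.1 hk.2.symm
      have := Multiset.card_le_card hsub
      rw [Multiset.card_range] at this
      omega
    obtain ⟨k0, hk0n, hk0μ, hk0⟩ := hex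
    intro k hk
    have h1 := smono k k0 (le_trans hk hk0n) hk0μ
    have h2 := (sbound k (by omega)).1
    rw [hk0] at h1
    linarith
  refine ⟨hμn, s0, ?_⟩
  set m := μ - (n + 1) with hm
  set f : ℕ → ℚ := fun k => (μ : ℚ) - s (μ - 1 - k) with hf
  set g : ℕ → ℚ := fun k => if k < m then s (k + (n + 1)) else (μ : ℚ) with hg
  have hmapf : (Multiset.range μ).map f
      = ((Multiset.range μ).map s).map (fun q => (μ : ℚ) - q) := by
    have h1 : (Multiset.range μ).map f
        = ((Multiset.range μ).map (fun k => μ - 1 - k)).map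
            (fun k => (μ : ℚ) - s k) := by
      rw [Multiset.map_map]; rfl
    rw [h1, msrev, Multiset.map_map]; rfl
  have hrefl : ((Multiset.range μ).map s).map (fun q => (μ : ℚ) - q)
        + Multiset.replicate (n + 1) (0 : ℚ)
      = (Multiset.range μ).map s + Multiset.replicate (n + 1) ((μ : ℚ)) := by
    rw [hmult', Multiset.map_bind]
    have hrep0 : Multiset.replicate (n + 1) (0 : ℚ)
        = (Finset.range (n + 1)).val.bind (fun _ => ({0} : Multiset ℚ)) := by
      rw [Multiset.bind_singleton, Multiset.map_const']
      simp
    have hrepμ : Multiset.replicate (n + 1) ((μ : ℚ))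
        = (Finset.range (n + 1)).val.bind (fun _ => ({(μ : ℚ)} : Multiset ℚ)) := by
      rw [Multiset.bind_singleton, Multiset.map_const']
      simp
    rw [hrep0, hrepμ, ← Multiset.bind_add, ← Multiset.bind_add]
    apply Multiset.bind_congr
    intro i hi
    rw [Finset.mem_val, Finset.mem_range] at hi
    exact block_refl μ (w i) (hw i (by omega))
  have hsplitT : (Multiset.range μ).map s
      = Multiset.replicate (n + 1) (0 : ℚ)
        + (Multiset.range m).map (fun k => s (k + (n + 1))) := by
    have hμeq : μ = (n + 1) + m := by omega
    conv_lhs => rw [hμeq]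
    rw [mrange_add, Multiset.map_add, Multiset.map_map]
    congr 1
    · have : Multiset.map s (Multiset.range (n + 1))
          = Multiset.map (fun _ => (0 : ℚ)) (Multiset.range (n + 1)) := by
        apply Multiset.map_congr rfl
        intro k hk
        rw [Multiset.mem_range] at hk
        exact s0 k (by omega)
      rw [this, Multiset.map_const']
      simp
    · apply Multiset.map_congr rfl
      intro k _
      simp only [Function.comp]
      rw [Nat.add_comm]
  have hsplitg : (Multiset.range μ).map g
      = (Multiset.range m).map (fun k => s (k + (n + 1)))
        + Multiset.replicate (n + 1) ((μ : ℚ)) := by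
    have hμeq : μ = m + (n + 1) := by omega
    conv_lhs => rw [hμeq]
    rw [mrange_add, Multiset.map_add, Multiset.map_map]
    congr 1
    · apply Multiset.map_congr rfl
      intro k hk
      rw [Multiset.mem_range] at hk
      simp only [hg]
      rw [if_pos hk]
    · have : Multiset.map (g ∘ (fun x => m + x)) (Multiset.range (n + 1))
          = Multiset.map (fun _ => (μ : ℚ)) (Multiset.range (n + 1)) := by
        apply Multiset.map_congr rfl
        intro k _
        simp only [Function.comp, hg]
        rw [if_neg (by omega)]
      rw [this, Multiset.map_const']
      simp
  have hfg : (Multiset.range μ).map f = (Multiset.range μ).map g := by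
    have h2 : (Multiset.range μ).map f + Multiset.replicate (n + 1) (0 : ℚ)
        = (Multiset.range μ).map g + Multiset.replicate (n + 1) (0 : ℚ) := by
      rw [hmapf, hrefl, hsplitg, hsplitT]
      abel
    exact add_right_cancel h2
  have hsf : List.Pairwise (· ≤ ·) ((List.range μ).map f) := by
    rw [List.pairwise_iff_get]
    intro i j hij
    have hi : (i : ℕ) < μ := by
      have := i.isLt; simpa using this
    have hj : (j : ℕ) < μ := by
      have := j.isLt; simpa using this
    simp only [List.get_eq_getElem, List.getElem_map, List.getElem_range]
    simp only [hf]
    have := smono (μ - 1 - (j : ℕ)) (μ - 1 - (i : ℕ)) (by omega) (by omega)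
    linarith
  have hsg : List.Pairwise (· ≤ ·) ((List.range μ).map g) := by
    rw [List.pairwise_iff_get]
    intro i j hij
    have hi : (i : ℕ) < μ := by
      have := i.isLt; simpa using this
    have hj : (j : ℕ) < μ := by
      have := j.isLt; simpa using this
    simp only [List.get_eq_getElem, List.getElem_map, List.getElem_range]
    simp only [hg]
    rcases lt_or_ge (i : ℕ) m with him | him
    · rw [if_pos him]
      rcases lt_or_ge (j : ℕ) m with hjm | hjm
      · rw [if_pos hjm]
        exact smono _ _ (by omega) (by omega)
      · rw [if_neg (by omega)]
        exact (sbound _ (by omega)).2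
    · rw [if_neg (by omega), if_neg (by omega)]
  have hlist : (List.range μ).map f = (List.range μ).map g := by
    apply List.Perm.eq_of_pairwise' hsf hsg
    apply Multiset.coe_eq_coe.mp
    exact hfg
  intro i h1 h2
  have hk : i - (n + 1) < m := by omega
  have hlen : i - (n + 1) < ((List.range μ).map f).length := by
    simp; omega
  have hlen' : i - (n + 1) < ((List.range μ).map g).length := by
    simp; omega
  have hpt := List.get_of_eq hlist ⟨i - (n + 1), hlen⟩
  simp only [List.get_eq_getElem, List.getElem_map, List.getElem_range] at hpt
  simp only [hf, hg] at hpt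
  rw [if_pos hk] at hpt
  have e1 : μ - 1 - (i - (n + 1)) = μ + n - i := by omega
  have e2 : i - (n + 1) + (n + 1) = i := by omega
  rw [e1, e2] at hpt
  linarith

def Gv (μ n : ℕ) (x : ℂ) (a b : ℕ) : ℂ :=
  if a + b = n then 1 else if a + b = μ + n then x else 0

/-- for every `x ≠ 0`, `𝒢^φ(x)` is symmetric and invertible,
`A_0^φ(x)` is `𝒢^φ(x)`-self-adjoint, `A_∞ + A_∞^* = n·Id` with respect to `𝒢^φ(x)`,
and `x·(d/dx)𝒢^φ(x) = (R^φ)ᵀ 𝒢^φ(x) + 𝒢^φ(x) R^φ`. -/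
theorem stmt_15 (n : ℕ) (hn : 1 ≤ n) (w : ℕ → ℕ) (hw0 : w 0 = 1)
    (hwpos : ∀ i ∈ Finset.Icc 1 n, 1 ≤ w i)
    (μ : ℕ) (hμ : μ = 1 + ∑ i ∈ Finset.Icc 1 n, w i)
    (s : ℕ → ℚ) (hmono : ∀ k, k + 1 < μ → s k ≤ s (k + 1))
    (hmult : (Multiset.range μ).map s =
      (Finset.range (n + 1)).val.bind fun i =>
        (Multiset.range (w i)).map fun ℓ => (ℓ : ℚ) * μ / (w i))
    (x : ℂ) (hx : x ≠ 0) :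
    (Gphi μ n x)ᵀ = Gphi μ n x ∧
    IsUnit (Gphi μ n x) ∧
    (A0phi μ x)ᵀ * Gphi μ n x = Gphi μ n x * A0phi μ x ∧
    (Ainf μ s)ᵀ * Gphi μ n x + Gphi μ n x * Ainf μ s = (n : ℂ) • Gphi μ n x ∧
    (∀ i j : Fin μ, HasDerivAt (fun y : ℂ => Gphi μ n y i j)
      (x⁻¹ * (((Rphi μ n s)ᵀ * Gphi μ n x + Gphi μ n x * Rphi μ n s) i j)) x) := by
  obtain ⟨hμn, s0, ssym⟩ := key n w hw0 hwpos μ hμ s hmono hmult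
  have hμ0 : 0 < μ := by omega
  have hμC : (μ : ℂ) ≠ 0 := Nat.cast_ne_zero.mpr (by omega)
  have hGG : ∀ (i j : Fin μ) (y : ℂ), Gphi μ n y i j = Gv μ n y i j := fun _ _ _ => rfl
  refine ⟨?_, ?_, ?_, ?_, ?_⟩
  · -- symmetry
    ext i j
    simp only [Matrix.transpose_apply, Gphi, Matrix.of_apply]
    rw [Nat.add_comm]
  · -- invertibility
    set H : Matrix (Fin μ) (Fin μ) ℂ := Matrix.of fun i j =>
      if (i : ℕ) + (j : ℕ) = n then 1
      else if (i : ℕ) + (j : ℕ) = μ + n then x⁻¹ else 0 with hH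
    have hGH : Gphi μ n x * H = 1 := by
      ext i j
      rw [Matrix.mul_apply, Matrix.one_apply]
      by_cases hi : (i : ℕ) ≤ n
      · have hsum : ∑ k : Fin μ, Gphi μ n x i k * H k j
            = Gphi μ n x i ⟨n - (i : ℕ), by omega⟩ * H ⟨n - (i : ℕ), by omega⟩ j := by
          apply Finset.sum_eq_single
          · intro b _ hb
            have hb1 : (i : ℕ) + (b : ℕ) ≠ n := by
              intro h
              exact hb (Fin.ext (by (try simp); omega))
            have hb2 : (i : ℕ) + (b : ℕ) ≠ μ + n := by
              have := b.isLt; omega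
            simp only [Gphi, Matrix.of_apply]
            rw [if_neg hb1, if_neg hb2, zero_mul]
          · intro h; exact absurd (Finset.mem_univ _) h
        rw [hsum]
        simp only [Gphi, Matrix.of_apply, hH]
        rw [if_pos (by (try simp); omega : (i : ℕ) + ((⟨n - (i : ℕ), by omega⟩ : Fin μ) : ℕ) = n)]
        have hj := j.isLt
        by_cases hij : i = j
        · rw [if_pos hij]
          subst hij
          rw [if_pos (by (try simp); (try omega))]
          ring
        · have hijv : (i : ℕ) ≠ (j : ℕ) := fun h => hij (Fin.ext h)
          rw [if_neg hij, if_neg (by (try simp); omega), if_neg (by (try simp); omega)]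
          ring
      · push_neg at hi
        have hiv := i.isLt
        have hsum : ∑ k : Fin μ, Gphi μ n x i k * H k j
            = Gphi μ n x i ⟨μ + n - (i : ℕ), by omega⟩ * H ⟨μ + n - (i : ℕ), by omega⟩ j := by
          apply Finset.sum_eq_single
          · intro b _ hb
            have hb1 : (i : ℕ) + (b : ℕ) ≠ n := by omega
            have hb2 : (i : ℕ) + (b : ℕ) ≠ μ + n := by
              intro h
              exact hb (Fin.ext (by (try simp); omega))
            simp only [Gphi, Matrix.of_apply]
            rw [if_neg hb1, if_neg hb2, zero_mul]
          · intro h; exact absurd (Finset.mem_univ _) h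
        rw [hsum]
        simp only [Gphi, Matrix.of_apply, hH]
        rw [if_neg (by (try simp); omega : ¬((i : ℕ) + ((⟨μ + n - (i : ℕ), by omega⟩ : Fin μ) : ℕ) = n)),
          if_pos (by (try simp); omega : (i : ℕ) + ((⟨μ + n - (i : ℕ), by omega⟩ : Fin μ) : ℕ) = μ + n)]
        have hj := j.isLt
        by_cases hij : i = j
        · rw [if_pos hij]
          subst hij
          rw [if_neg (by (try simp); omega), if_pos (by (try simp); omega)]
          field_simp
        · have hijv : (i : ℕ) ≠ (j : ℕ) := fun h => hij (Fin.ext h)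
          rw [if_neg hij, if_neg (by (try simp); omega), if_neg (by (try simp); omega)]
          ring
    exact ⟨⟨Gphi μ n x, H, hGH, mul_eq_one_comm.mp hGH⟩, rfl⟩
  · -- A0 self-adjointness
    ext i j
    have hiv := i.isLt
    have hjv := j.isLt
    have hL : ((A0phi μ x)ᵀ * Gphi μ n x) i j
        = if hi : (i : ℕ) + 1 < μ then (μ : ℂ) * Gv μ n x ((i : ℕ) + 1) (j : ℕ)
          else (μ : ℂ) * x * Gv μ n x 0 (j : ℕ) := by
      rw [Matrix.mul_apply]
      simp only [Matrix.transpose_apply]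
      by_cases hi : (i : ℕ) + 1 < μ
      · rw [dif_pos hi]
        have hsum : ∑ k : Fin μ, A0phi μ x k i * Gphi μ n x k j
            = A0phi μ x ⟨(i : ℕ) + 1, hi⟩ i * Gphi μ n x ⟨(i : ℕ) + 1, hi⟩ j := by
          apply Finset.sum_eq_single
          · intro b _ hb
            have hb1 : (b : ℕ) ≠ (i : ℕ) + 1 := fun h => hb (Fin.ext (by (try simp); omega))
            have hb2 : ¬((b : ℕ) = 0 ∧ (i : ℕ) = μ - 1) := by omega
            simp only [A0phi, Matrix.of_apply]
            rw [if_neg hb1, if_neg hb2, zero_mul]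
          · intro h; exact absurd (Finset.mem_univ _) h
        rw [hsum, hGG]
        simp only [A0phi, Matrix.of_apply]
        rw [if_pos (by (try simp); (try omega))]
      · rw [dif_neg hi]
        have hsum : ∑ k : Fin μ, A0phi μ x k i * Gphi μ n x k j
            = A0phi μ x ⟨0, hμ0⟩ i * Gphi μ n x ⟨0, hμ0⟩ j := by
          apply Finset.sum_eq_single
          · intro b _ hb
            have hb1 : (b : ℕ) ≠ (i : ℕ) + 1 := by omega
            have hb2 : ¬((b : ℕ) = 0 ∧ (i : ℕ) = μ - 1) := by
              intro h
              exact hb (Fin.ext (by (try simp); omega))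
            simp only [A0phi, Matrix.of_apply]
            rw [if_neg hb1, if_neg hb2, zero_mul]
          · intro h; exact absurd (Finset.mem_univ _) h
        rw [hsum, hGG]
        simp only [A0phi, Matrix.of_apply]
        rw [if_neg (by omega), if_pos (by (try simp); omega)]
    have hR : (Gphi μ n x * A0phi μ x) i j
        = if hj : (j : ℕ) + 1 < μ then Gv μ n x (i : ℕ) ((j : ℕ) + 1) * (μ : ℂ)
          else Gv μ n x (i : ℕ) 0 * ((μ : ℂ) * x) := by
      rw [Matrix.mul_apply]
      by_cases hj : (j : ℕ) + 1 < μ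
      · rw [dif_pos hj]
        have hsum : ∑ k : Fin μ, Gphi μ n x i k * A0phi μ x k j
            = Gphi μ n x i ⟨(j : ℕ) + 1, hj⟩ * A0phi μ x ⟨(j : ℕ) + 1, hj⟩ j := by
          apply Finset.sum_eq_single
          · intro b _ hb
            have hb1 : (b : ℕ) ≠ (j : ℕ) + 1 := fun h => hb (Fin.ext (by (try simp); omega))
            have hb2 : ¬((b : ℕ) = 0 ∧ (j : ℕ) = μ - 1) := by omega
            simp only [A0phi, Matrix.of_apply]
            rw [if_neg hb1, if_neg hb2, mul_zero]
          · intro h; exact absurd (Finset.mem_univ _) h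
        rw [hsum, hGG]
        simp only [A0phi, Matrix.of_apply]
        rw [if_pos (by (try simp); (try omega))]
      · rw [dif_neg hj]
        have hsum : ∑ k : Fin μ, Gphi μ n x i k * A0phi μ x k j
            = Gphi μ n x i ⟨0, hμ0⟩ * A0phi μ x ⟨0, hμ0⟩ j := by
          apply Finset.sum_eq_single
          · intro b _ hb
            have hb1 : (b : ℕ) ≠ (j : ℕ) + 1 := by omega
            have hb2 : ¬((b : ℕ) = 0 ∧ (j : ℕ) = μ - 1) := by
              intro h
              exact hb (Fin.ext (by (try simp); omega))
            simp only [A0phi, Matrix.of_apply]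
            rw [if_neg hb1, if_neg hb2, mul_zero]
          · intro h; exact absurd (Finset.mem_univ _) h
        rw [hsum, hGG]
        simp only [A0phi, Matrix.of_apply]
        rw [if_neg (by omega), if_pos (by (try simp); omega)]
    rw [hL, hR]
    by_cases hi : (i : ℕ) + 1 < μ
    · rw [dif_pos hi]
      by_cases hj : (j : ℕ) + 1 < μ
      · rw [dif_pos hj]
        have : Gv μ n x ((i : ℕ) + 1) (j : ℕ) = Gv μ n x (i : ℕ) ((j : ℕ) + 1) := by
          simp only [Gv]
          rw [show (i : ℕ) + 1 + (j : ℕ) = (i : ℕ) + ((j : ℕ) + 1) by omega]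
        rw [this]; ring
      · rw [dif_neg hj]
        simp only [Gv]
        by_cases hin : (i : ℕ) = n
        · rw [if_neg (by omega), if_pos (by omega), if_pos (by omega)]; ring
        · rw [if_neg (by omega), if_neg (by omega), if_neg (by omega),
            if_neg (by omega)]; ring
    · rw [dif_neg hi]
      by_cases hj : (j : ℕ) + 1 < μ
      · rw [dif_pos hj]
        simp only [Gv]
        by_cases hjn : (j : ℕ) = n
        · rw [if_pos (by omega), if_neg (by omega), if_pos (by omega)]; ring
        · rw [if_neg (by omega), if_neg (by omega), if_neg (by omega),
            if_neg (by omega)]; ring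
      · rw [dif_neg hj]
        simp only [Gv]
        rw [show (0 : ℕ) + (j : ℕ) = (i : ℕ) + 0 by omega]
        ring
  · -- Ainf identity
    ext i j
    have hiv := i.isLt
    have hjv := j.isLt
    rw [Matrix.add_apply, Matrix.smul_apply]
    simp only [Ainf, Matrix.diagonal_transpose, Matrix.diagonal_mul, Matrix.mul_diagonal]
    simp only [Gphi, Matrix.of_apply, smul_eq_mul]
    by_cases h1 : (i : ℕ) + (j : ℕ) = n
    · rw [if_pos h1]
      have hc : ((i : ℕ) : ℂ) + ((j : ℕ) : ℂ) = (n : ℂ) := by exact_mod_cast h1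
      rw [s0 (i : ℕ) (by omega), s0 (j : ℕ) (by omega)]
      push_cast
      linear_combination hc
    · rw [if_neg h1]
      by_cases h2 : (i : ℕ) + (j : ℕ) = μ + n
      · rw [if_pos h2]
        have hin : n + 1 ≤ (i : ℕ) := by omega
        have hs : s (i : ℕ) + s (μ + n - (i : ℕ)) = μ := ssym (i : ℕ) hin hiv
        rw [show μ + n - (i : ℕ) = (j : ℕ) by omega] at hs
        have hsC : ((s (i : ℕ) : ℚ) : ℂ) + ((s (j : ℕ) : ℚ) : ℂ) = (μ : ℂ) := by
          exact_mod_cast hs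
        have hc : ((i : ℕ) : ℂ) + ((j : ℕ) : ℂ) = (μ : ℂ) + (n : ℂ) := by exact_mod_cast h2
        linear_combination x * hc - x * hsC
      · rw [if_neg h2]; ring
  · -- derivative
    intro i j
    have hiv := i.isLt
    have hjv := j.isLt
    rw [Matrix.add_apply]
    simp only [Rphi, Matrix.diagonal_transpose, Matrix.diagonal_mul, Matrix.mul_diagonal]
    simp only [Gphi, Matrix.of_apply]
    by_cases h1 : (i : ℕ) + (j : ℕ) = n
    · simp only [if_pos h1]
      have hv : x⁻¹ * ((if (i : ℕ) ≤ n then 0 else ((s (i : ℕ) : ℚ) : ℂ) / (μ : ℂ)) * 1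
          + 1 * (if (j : ℕ) ≤ n then 0 else ((s (j : ℕ) : ℚ) : ℂ) / (μ : ℂ))) = 0 := by
        rw [if_pos (by omega : (i : ℕ) ≤ n), if_pos (by omega : (j : ℕ) ≤ n)]
        ring
      rw [hv]
      exact hasDerivAt_const x 1
    · simp only [if_neg h1]
      by_cases h2 : (i : ℕ) + (j : ℕ) = μ + n
      · simp only [if_pos h2]
        have hin : n + 1 ≤ (i : ℕ) := by omega
        have hs : s (i : ℕ) + s (μ + n - (i : ℕ)) = μ := ssym (i : ℕ) hin hiv
        rw [show μ + n - (i : ℕ) = (j : ℕ) by omega] at hs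
        have hsC : ((s (i : ℕ) : ℚ) : ℂ) + ((s (j : ℕ) : ℚ) : ℂ) = (μ : ℂ) := by
          exact_mod_cast hs
        have hv : x⁻¹ * ((if (i : ℕ) ≤ n then 0 else ((s (i : ℕ) : ℚ) : ℂ) / (μ : ℂ)) * x
            + x * (if (j : ℕ) ≤ n then 0 else ((s (j : ℕ) : ℚ) : ℂ) / (μ : ℂ))) = 1 := by
          rw [if_neg (by omega : ¬(i : ℕ) ≤ n), if_neg (by omega : ¬(j : ℕ) ≤ n)]
          field_simp
          linear_combination hsC
        rw [hv]
        exact hasDerivAt_id' x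
      · simp only [if_neg h2]
        have hv : x⁻¹ * ((if (i : ℕ) ≤ n then 0 else ((s (i : ℕ) : ℚ) : ℂ) / (μ : ℂ)) * 0
            + 0 * (if (j : ℕ) ≤ n then 0 else ((s (j : ℕ) : ℚ) : ℂ) / (μ : ℂ))) = 0 := by
          ring
        rw [hv]
        exact hasDerivAt_const x 0
end
end
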